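/- arXiv:2001.10679 — 7 statements merged into one kernel-verified Lean document; each statement's English description precedes it below -/
import Mathlib

section
/- For any integer s ≥ 1 and any constant c > 0, the set B₁(c√s) ∩ B₂(1) ⊆ ℝⁿ is contained in (1+c) times the closed convex hull of B₀(s) ∩ B₂(1). -/
open Pointwise

/-- For any `k ≤ n` there is a set of `k` coordinates carrying the `k` largest values of `g`. -/
lemma exists_top_subset_aux {n : ℕ} (k : ℕ) (hk : k ≤ n) (g : Fin n → ℝ) :
    ∃ S : Finset (Fin n), S.card = k ∧ ∀ i ∉ S, ∀ j ∈ S, g i ≤ g j := by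
  have hne : (Finset.powersetCard k (Finset.univ : Finset (Fin n))).Nonempty := by
    rw [Finset.powersetCard_nonempty]
    simpa using hk
  obtain ⟨S, hSmem, hSmax⟩ := Finset.exists_max_image _ (fun T => ∑ i ∈ T, g i) hne
  have hScard : S.card = k := (Finset.mem_powersetCard.mp hSmem).2
  refine ⟨S, hScard, ?_⟩
  intro i hi j hj
  by_contra h
  push_neg at h
  have hiS' : i ∉ S.erase j := fun h' => hi (Finset.mem_of_mem_erase h')
  have hk1 : 1 ≤ k := hScard ▸ Finset.card_pos.mpr ⟨j, hj⟩
  have hcard' : (insert i (S.erase j)).card = k := by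
    rw [Finset.card_insert_of_notMem hiS', Finset.card_erase_of_mem hj, hScard]
    omega
  have hmem' : insert i (S.erase j) ∈ Finset.powersetCard k (Finset.univ : Finset (Fin n)) :=
    Finset.mem_powersetCard.mpr ⟨Finset.subset_univ _, hcard'⟩
  have hsum : ∑ x ∈ insert i (S.erase j), g x = g i + (∑ x ∈ S, g x - g j) := by
    rw [Finset.sum_insert hiS', Finset.sum_erase_eq_sub hj]
  have := hSmax _ hmem'
  simp only [hsum] at this
  linarith

/-- For any integer `s ≥ 1` and constant `c > 0`, the intersection of the ℓ₁-ball of radius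
`c√s` with the ℓ₂-unit ball is contained in `(1+c)` times the closed convex hull of the set of
`s`-sparse vectors in the ℓ₂-unit ball. -/
theorem l1_inter_l2_ball_subset (n : ℕ) (s : ℕ) (hs : 1 ≤ s) (c : ℝ) (hc : 0 < c) :
    {x : EuclideanSpace ℝ (Fin n) | ∑ i, |x i| ≤ c * Real.sqrt s} ∩ {x | ‖x‖ ≤ 1}
      ⊆ (1 + c) • closure (convexHull ℝ
          ({x : EuclideanSpace ℝ (Fin n) | Set.ncard {i | x i ≠ 0} ≤ s} ∩ {x | ‖x‖ ≤ 1})) := by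
  set K : Set (EuclideanSpace ℝ (Fin n)) :=
    {x : EuclideanSpace ℝ (Fin n) | Set.ncard {i | x i ≠ 0} ≤ s} ∩ {x | ‖x‖ ≤ 1} with hK
  intro x hx
  obtain ⟨hx1, hx2⟩ := hx
  simp only [Set.mem_setOf_eq] at hx1 hx2
  have h1c : (0:ℝ) < 1 + c := by linarith
  rw [Set.mem_smul_set_iff_inv_smul_mem₀ (ne_of_gt h1c)]
  by_contra hmem
  -- separate the point from the closed convex set
  obtain ⟨f, u, hfa, hfx⟩ := geometric_hahn_banach_closed_point
      ((convex_convexHull ℝ K).closure) isClosed_closure hmem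
  set y : EuclideanSpace ℝ (Fin n) :=
    (InnerProductSpace.toDual ℝ (EuclideanSpace ℝ (Fin n))).symm f with hy
  have hfy : ∀ z : EuclideanSpace ℝ (Fin n), f z = ∑ i, y i * z i := by
    intro z
    have : inner ℝ y z = f z := InnerProductSpace.toDual_symm_apply
    rw [← this, PiLp.inner_apply]
    simp [RCLike.inner_apply, mul_comm]
  -- choose the top min s n coordinates of |y|
  obtain ⟨S, hScard, hStop⟩ := exists_top_subset_aux (min s n) (min_le_right s n)
      (fun i => |y i|)
  set A : ℝ := Real.sqrt (∑ j ∈ S, y j ^ 2) with hA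
  have hAnn : 0 ≤ A := Real.sqrt_nonneg _
  have hA2 : A ^ 2 = ∑ j ∈ S, y j ^ 2 :=
    Real.sq_sqrt (Finset.sum_nonneg fun j _ => sq_nonneg _)
  have hxsq : ∑ i, x i ^ 2 ≤ 1 := by
    have hn := EuclideanSpace.norm_eq x
    simp only [Real.norm_eq_abs, sq_abs] at hn
    have h1 : ∑ i, x i ^ 2 = ‖x‖ ^ 2 := by
      rw [hn, Real.sq_sqrt (Finset.sum_nonneg fun i _ => sq_nonneg _)]
    rw [h1]
    calc ‖x‖ ^ 2 ≤ 1 ^ 2 := by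
          apply pow_le_pow_left₀ (norm_nonneg _) hx2
      _ = 1 := one_pow 2
  -- bound on the off-S coordinates of y
  have hoff : ∀ i ∉ S, |y i| ≤ A / Real.sqrt s := by
    intro i hi
    have hsn : s < n := by
      by_contra h
      push_neg at h
      have : S.card = n := by omega
      have : S = Finset.univ := Finset.eq_univ_of_card _ (by simpa using this)
      exact hi (this ▸ Finset.mem_univ i)
    have hScards : S.card = s := by omega
    have hkey : (s : ℝ) * y i ^ 2 ≤ ∑ j ∈ S, y j ^ 2 := by
      calc (s : ℝ) * y i ^ 2 = ∑ _j ∈ S, y i ^ 2 := by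
            rw [Finset.sum_const, hScards, nsmul_eq_mul]
        _ ≤ ∑ j ∈ S, y j ^ 2 := by
            apply Finset.sum_le_sum
            intro j hj
            have := hStop i hi j hj
            calc y i ^ 2 = |y i| ^ 2 := (sq_abs _).symm
              _ ≤ |y j| ^ 2 := by
                  apply pow_le_pow_left₀ (abs_nonneg _) this
              _ = y j ^ 2 := sq_abs _
    have hssqrt : (0:ℝ) < Real.sqrt s := Real.sqrt_pos.mpr (by exact_mod_cast hs)
    have hspos : (0:ℝ) < s := by exact_mod_cast hs
    calc |y i| = Real.sqrt (y i ^ 2) := (Real.sqrt_sq_eq_abs _).symm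
      _ ≤ Real.sqrt (A ^ 2 / s) := by
          apply Real.sqrt_le_sqrt
          rw [le_div_iff₀ hspos, hA2]
          nlinarith [hkey]
      _ = A / Real.sqrt s := by
          rw [Real.sqrt_div (sq_nonneg A), Real.sqrt_sq hAnn]
  -- main estimate : ⟪y, x⟫ ≤ (1 + c) * A
  have hmain : ∑ i, y i * x i ≤ (1 + c) * A := by
    rw [← Finset.sum_add_sum_compl S (fun i => y i * x i)]
    have hinS : ∑ i ∈ S, y i * x i ≤ A := by
      calc ∑ i ∈ S, y i * x i
          ≤ Real.sqrt (∑ i ∈ S, y i ^ 2) * Real.sqrt (∑ i ∈ S, x i ^ 2) :=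
            Real.sum_mul_le_sqrt_mul_sqrt _ _ _
        _ ≤ A * 1 := by
            apply mul_le_mul_of_nonneg_left _ hAnn
            rw [show (1:ℝ) = Real.sqrt 1 from (Real.sqrt_one).symm]
            apply Real.sqrt_le_sqrt
            calc ∑ i ∈ S, x i ^ 2 ≤ ∑ i, x i ^ 2 :=
                  Finset.sum_le_sum_of_subset_of_nonneg (Finset.subset_univ _)
                    (fun i _ _ => sq_nonneg _)
              _ ≤ 1 := hxsq
        _ = A := mul_one A
    have houtS : ∑ i ∈ Sᶜ, y i * x i ≤ c * A := by
      have hssqrt : (0:ℝ) < Real.sqrt s := Real.sqrt_pos.mpr (by exact_mod_cast hs)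
      calc ∑ i ∈ Sᶜ, y i * x i ≤ ∑ i ∈ Sᶜ, (A / Real.sqrt s) * |x i| := by
            apply Finset.sum_le_sum
            intro i hi
            calc y i * x i ≤ |y i * x i| := le_abs_self _
              _ = |y i| * |x i| := abs_mul _ _
              _ ≤ (A / Real.sqrt s) * |x i| :=
                  mul_le_mul_of_nonneg_right (hoff i (Finset.mem_compl.mp hi)) (abs_nonneg _)
        _ = (A / Real.sqrt s) * ∑ i ∈ Sᶜ, |x i| := by rw [Finset.mul_sum]
        _ ≤ (A / Real.sqrt s) * (c * Real.sqrt s) := by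
            apply mul_le_mul_of_nonneg_left _ (div_nonneg hAnn hssqrt.le)
            calc ∑ i ∈ Sᶜ, |x i| ≤ ∑ i, |x i| :=
                  Finset.sum_le_sum_of_subset_of_nonneg (Finset.subset_univ _)
                    (fun i _ _ => abs_nonneg _)
              _ ≤ c * Real.sqrt s := hx1
        _ = c * A := by field_simp
    linarith
  -- produce an element of K where f attains at least A
  have hexists : ∃ a ∈ K, A ≤ f a := by
    by_cases hA0 : A = 0
    · refine ⟨0, ⟨?_, by simp⟩, ?_⟩
      · simp only [Set.mem_setOf_eq]
        have : {i : Fin n | (0 : EuclideanSpace ℝ (Fin n)) i ≠ 0} = ∅ := by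
          ext i; simp
        rw [this]
        simp
      · rw [hfy]
        simp [hA0]
    · set a : EuclideanSpace ℝ (Fin n) := WithLp.toLp 2 (fun i => if i ∈ S then A⁻¹ * y i else 0) with ha
      have hApos : 0 < A := lt_of_le_of_ne hAnn (Ne.symm hA0)
      have hsum_a : ∑ i, a i ^ 2 = 1 := by
        rw [ha]
        simp only
        rw [← Finset.sum_subset (Finset.subset_univ S)
            (by intro i _ hi; simp [if_neg hi])]
        have : ∑ i ∈ S, (if i ∈ S then A⁻¹ * y i else 0) ^ 2 =
            A⁻¹ ^ 2 * ∑ i ∈ S, y i ^ 2 := by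
          rw [Finset.mul_sum]
          apply Finset.sum_congr rfl
          intro i hi
          rw [if_pos hi]
          ring
        rw [this, ← hA2]
        field_simp
      refine ⟨a, ⟨?_, ?_⟩, ?_⟩
      · simp only [Set.mem_setOf_eq]
        have hsub : {i : Fin n | a i ≠ 0} ⊆ ↑S := by
          intro i hi
          simp only [Set.mem_setOf_eq, ha] at hi
          by_contra h
          exact hi (if_neg h)
        calc Set.ncard {i | a i ≠ 0} ≤ Set.ncard (↑S : Set (Fin n)) :=
              Set.ncard_le_ncard hsub S.finite_toSet
          _ = S.card := Set.ncard_coe_finset S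
          _ ≤ s := by omega
      · simp only [Set.mem_setOf_eq]
        rw [EuclideanSpace.norm_eq]
        simp only [Real.norm_eq_abs, sq_abs]
        rw [hsum_a, Real.sqrt_one]
      · rw [hfy]
        have : ∑ i, y i * a i = A⁻¹ * ∑ i ∈ S, y i ^ 2 := by
          rw [ha]
          simp only
          rw [← Finset.sum_subset (Finset.subset_univ S)
              (by intro i _ hi; simp [if_neg hi])]
          rw [Finset.mul_sum]
          apply Finset.sum_congr rfl
          intro i hi
          rw [if_pos hi]
          ring
        rw [this, ← hA2, sq, inv_mul_cancel_left₀ hA0]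
  obtain ⟨a, haK, hafA⟩ := hexists
  have haKc : a ∈ closure (convexHull ℝ K) := subset_closure (subset_convexHull ℝ K haK)
  have h1 : f a < u := hfa a haKc
  have h2 : u < f ((1 + c)⁻¹ • x) := hfx
  have h3 : f ((1 + c)⁻¹ • x) = (1 + c)⁻¹ * ∑ i, y i * x i := by
    rw [map_smul]
    simp only [smul_eq_mul]
    rw [hfy]
  have h4 : (1 + c)⁻¹ * ∑ i, y i * x i ≤ A := by
    rw [inv_mul_le_iff₀ h1c]
    exact hmain
  linarith
end

section
/- Let Γ ∈ ℝ^{n×n} be a symmetric matrix, s ≥ 1 an integer, and δ > 0. Suppose |vᵀΓv| ≤ δ for all v with ‖v‖₀ ≤ 2s and ‖v‖₂ ≤ 1. Then |vᵀΓv| ≤ 75δ‖v‖₂² for all v with ‖v‖₁ ≤ 4√s‖v‖₂. -/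
open Matrix

noncomputable def n2 {n : ℕ} (v : Fin n → ℝ) : ℝ := Real.sqrt (∑ i, v i ^ 2)

lemma n2_nonneg {n : ℕ} (v : Fin n → ℝ) : 0 ≤ n2 v := Real.sqrt_nonneg _

lemma sq_n2 {n : ℕ} (v : Fin n → ℝ) : n2 v ^ 2 = ∑ i, v i ^ 2 :=
  Real.sq_sqrt (Finset.sum_nonneg fun i _ => sq_nonneg _)

noncomputable def suppF {n : ℕ} (v : Fin n → ℝ) : Finset (Fin n) :=
  Finset.univ.filter (fun i => v i ≠ 0)

lemma mem_suppF {n : ℕ} (v : Fin n → ℝ) (i : Fin n) : i ∈ suppF v ↔ v i ≠ 0 := by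
  simp [suppF]

lemma ncard_supp {n : ℕ} (v : Fin n → ℝ) : Set.ncard {i | v i ≠ 0} = (suppF v).card := by
  rw [← Set.ncard_coe_finset]
  congr 1
  ext i
  simp [suppF]

lemma n2_zero {n : ℕ} : n2 (0 : Fin n → ℝ) = 0 := by simp [n2]

lemma bilin_symm {n : ℕ} (Γ : Matrix (Fin n) (Fin n) ℝ) (hΓ : Γ.IsSymm) (x y : Fin n → ℝ) : y ⬝ᵥ Γ.mulVec x = x ⬝ᵥ Γ.mulVec y := by
  unfold dotProduct Matrix.mulVec
  simp only [dotProduct, Finset.mul_sum]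
  rw [Finset.sum_comm]
  refine Finset.sum_congr rfl fun i _ => Finset.sum_congr rfl fun j _ => ?_
  rw [hΓ.apply i j]; ring

lemma quad_scaled {n s : ℕ} {δ : ℝ} (Γ : Matrix (Fin n) (Fin n) ℝ)
    (h : ∀ v : Fin n → ℝ, Set.ncard {i | v i ≠ 0} ≤ 2 * s →
      Real.sqrt (∑ i, v i ^ 2) ≤ 1 → |v ⬝ᵥ Γ.mulVec v| ≤ δ)
    (w : Fin n → ℝ) (hw : (suppF w).card ≤ 2 * s) :
    |w ⬝ᵥ Γ.mulVec w| ≤ δ * ∑ i, w i ^ 2 := by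
  by_cases h0 : ∑ i, w i ^ 2 = 0
  · have hw0 : w = 0 := by
      funext i
      have := (Finset.sum_eq_zero_iff_of_nonneg (fun i _ => sq_nonneg (w i))).1 h0 i (by simp)
      exact pow_eq_zero_iff (by norm_num) |>.1 this
    simp [hw0, h0]
  · have hpos : 0 < ∑ i, w i ^ 2 :=
      lt_of_le_of_ne (Finset.sum_nonneg fun i _ => sq_nonneg (w i)) (Ne.symm h0)
    set c := Real.sqrt (∑ i, w i ^ 2) with hc
    have hcpos : 0 < c := Real.sqrt_pos.2 hpos
    have hcsq : c ^ 2 = ∑ i, w i ^ 2 := Real.sq_sqrt hpos.le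
    have key := h (fun i => w i / c) ?_ ?_
    · have hdot : (fun i => w i / c) ⬝ᵥ Γ.mulVec (fun i => w i / c)
          = (w ⬝ᵥ Γ.mulVec w) / c ^ 2 := by
        unfold dotProduct Matrix.mulVec
        simp only [dotProduct, Finset.mul_sum, Finset.sum_div]
        refine Finset.sum_congr rfl fun i _ => Finset.sum_congr rfl fun j _ => ?_
        ring
      rw [hdot, abs_div, abs_of_pos (pow_pos hcpos 2), div_le_iff₀ (pow_pos hcpos 2)] at key
      calc |w ⬝ᵥ Γ.mulVec w| ≤ δ * c ^ 2 := key
        _ = δ * ∑ i, w i ^ 2 := by rw [hcsq]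
    · rw [ncard_supp]
      refine le_trans (Finset.card_le_card ?_) hw
      intro i hi
      rw [mem_suppF] at hi ⊢
      intro h'; exact hi (by rw [h', zero_div])
    · have : ∑ i, (w i / c) ^ 2 = 1 := by
        simp only [div_pow, ← Finset.sum_div]
        rw [← hcsq]; field_simp
      rw [this, Real.sqrt_one]

lemma bilin_half {n s : ℕ} {δ : ℝ} (Γ : Matrix (Fin n) (Fin n) ℝ) (hΓ : Γ.IsSymm)
    (h : ∀ v : Fin n → ℝ, Set.ncard {i | v i ≠ 0} ≤ 2 * s →
      Real.sqrt (∑ i, v i ^ 2) ≤ 1 → |v ⬝ᵥ Γ.mulVec v| ≤ δ)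
    (x y : Fin n → ℝ) (hx : (suppF x).card ≤ s) (hy : (suppF y).card ≤ s) :
    |x ⬝ᵥ Γ.mulVec y| ≤ (δ / 2) * ((∑ i, x i ^ 2) + (∑ i, y i ^ 2)) := by
  have hsub : ∀ (a b : ℝ) (u v : Fin n → ℝ),
      suppF (fun i => a * u i + b * v i) ⊆ suppF u ∪ suppF v := by
    intro a b u v i hi
    rw [mem_suppF] at hi
    rw [Finset.mem_union, mem_suppF, mem_suppF]
    by_contra hcon
    push_neg at hcon
    apply hi
    rw [hcon.1, hcon.2]; ring
  have hcard : ∀ (a b : ℝ), (suppF (fun i => a * x i + b * y i)).card ≤ 2 * s := by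
    intro a b
    calc (suppF (fun i => a * x i + b * y i)).card
        ≤ (suppF x ∪ suppF y).card := Finset.card_le_card (hsub a b x y)
      _ ≤ (suppF x).card + (suppF y).card := Finset.card_union_le _ _
      _ ≤ 2 * s := by omega
  have hp := quad_scaled Γ h (fun i => x i + y i) (by
    have := hcard 1 1; simpa using this)
  have hm := quad_scaled Γ h (fun i => x i - y i) (by
    have := hcard 1 (-1); simp only [one_mul, neg_one_mul] at this
    simpa [sub_eq_add_neg] using this)
  have hpol : 4 * (x ⬝ᵥ Γ.mulVec y) =
      ((fun i => x i + y i) ⬝ᵥ Γ.mulVec (fun i => x i + y i)) -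
      ((fun i => x i - y i) ⬝ᵥ Γ.mulVec (fun i => x i - y i)) := by
    have e1 : (fun i => x i + y i) = x + y := rfl
    have e2 : (fun i => x i - y i) = x - y := rfl
    rw [e1, e2]
    simp only [Matrix.mulVec_add, Matrix.mulVec_sub, dotProduct_add, dotProduct_sub,
      add_dotProduct, sub_dotProduct]
    rw [bilin_symm Γ hΓ x y]
    ring
  have habs : |4 * (x ⬝ᵥ Γ.mulVec y)| ≤
      δ * (∑ i, (x i + y i) ^ 2) + δ * (∑ i, (x i - y i) ^ 2) := by
    rw [hpol]
    exact le_trans (abs_sub _ _) (add_le_add hp hm)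
  have hpar : (∑ i, (x i + y i) ^ 2) + (∑ i, (x i - y i) ^ 2)
      = 2 * ((∑ i, x i ^ 2) + (∑ i, y i ^ 2)) := by
    rw [← Finset.sum_add_distrib]
    calc ∑ i, ((x i + y i) ^ 2 + (x i - y i) ^ 2)
        = ∑ i, 2 * (x i ^ 2 + y i ^ 2) := Finset.sum_congr rfl fun i _ => by ring
      _ = 2 * ((∑ i, x i ^ 2) + (∑ i, y i ^ 2)) := by
          rw [← Finset.mul_sum, Finset.sum_add_distrib]
  rw [abs_mul, abs_of_pos (by norm_num : (0:ℝ) < 4)] at habs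
  have h2 : δ * (∑ i, (x i + y i) ^ 2) + δ * (∑ i, (x i - y i) ^ 2)
      = 2 * δ * ((∑ i, x i ^ 2) + (∑ i, y i ^ 2)) := by
    rw [← mul_add, hpar]; ring
  linarith

lemma bilin_bound {n s : ℕ} {δ : ℝ} (Γ : Matrix (Fin n) (Fin n) ℝ) (hΓ : Γ.IsSymm)
    (h : ∀ v : Fin n → ℝ, Set.ncard {i | v i ≠ 0} ≤ 2 * s →
      Real.sqrt (∑ i, v i ^ 2) ≤ 1 → |v ⬝ᵥ Γ.mulVec v| ≤ δ)
    (x y : Fin n → ℝ) (hx : (suppF x).card ≤ s) (hy : (suppF y).card ≤ s) :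
    |x ⬝ᵥ Γ.mulVec y| ≤ δ * n2 x * n2 y := by
  by_cases hx0 : n2 x = 0
  · have : x = 0 := by
      funext i
      have h0 : ∑ i, x i ^ 2 = 0 := by
        have := sq_n2 x; rw [hx0] at this; simpa using this.symm
      have := (Finset.sum_eq_zero_iff_of_nonneg (fun i _ => sq_nonneg (x i))).1 h0 i (by simp)
      exact pow_eq_zero_iff (by norm_num) |>.1 this
    simp [this, n2_zero]
  by_cases hy0 : n2 y = 0
  · have : y = 0 := by
      funext i
      have h0 : ∑ i, y i ^ 2 = 0 := by
        have := sq_n2 y; rw [hy0] at this; simpa using this.symm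
      have := (Finset.sum_eq_zero_iff_of_nonneg (fun i _ => sq_nonneg (y i))).1 h0 i (by simp)
      exact pow_eq_zero_iff (by norm_num) |>.1 this
    simp [this, n2_zero]
  have hxp : 0 < n2 x := lt_of_le_of_ne (n2_nonneg x) (Ne.symm hx0)
  have hyp : 0 < n2 y := lt_of_le_of_ne (n2_nonneg y) (Ne.symm hy0)
  set t := Real.sqrt (n2 y / n2 x) with ht
  have htp : 0 < t := Real.sqrt_pos.2 (div_pos hyp hxp)
  have htsq : t ^ 2 = n2 y / n2 x := Real.sq_sqrt (div_pos hyp hxp).le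
  have hsx : (suppF (fun i => t * x i)).card ≤ s := by
    refine le_trans (Finset.card_le_card ?_) hx
    intro i hi
    rw [mem_suppF] at hi ⊢
    intro h'; exact hi (by rw [h', mul_zero])
  have hsy : (suppF (fun i => t⁻¹ * y i)).card ≤ s := by
    refine le_trans (Finset.card_le_card ?_) hy
    intro i hi
    rw [mem_suppF] at hi ⊢
    intro h'; exact hi (by rw [h', mul_zero])
  have key := bilin_half Γ hΓ h (fun i => t * x i) (fun i => t⁻¹ * y i) hsx hsy
  have hdot : (fun i => t * x i) ⬝ᵥ Γ.mulVec (fun i => t⁻¹ * y i)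
      = x ⬝ᵥ Γ.mulVec y := by
    unfold dotProduct Matrix.mulVec
    simp only [dotProduct, Finset.mul_sum]
    refine Finset.sum_congr rfl fun i _ => Finset.sum_congr rfl fun j _ => ?_
    field_simp
  have hsum1 : ∑ i, (t * x i) ^ 2 = t ^ 2 * ∑ i, x i ^ 2 := by
    rw [Finset.mul_sum]; exact Finset.sum_congr rfl fun i _ => by ring
  have hsum2 : ∑ i, (t⁻¹ * y i) ^ 2 = t⁻¹ ^ 2 * ∑ i, y i ^ 2 := by
    rw [Finset.mul_sum]; exact Finset.sum_congr rfl fun i _ => by ring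
  rw [hdot, hsum1, hsum2, htsq] at key
  have hinv : (t⁻¹) ^ 2 = n2 x / n2 y := by
    rw [inv_pow, htsq, inv_div]
  rw [hinv, ← sq_n2 x, ← sq_n2 y] at key
  have : n2 y / n2 x * n2 x ^ 2 + n2 x / n2 y * n2 y ^ 2 = 2 * (n2 x * n2 y) := by
    field_simp
    ring
  rw [this] at key
  linarith

lemma exists_top {ι : Type*} [DecidableEq ι] (s : ℕ) (S : Finset ι) (f : ι → ℝ) :
    ∃ T ⊆ S, T.card = min s S.card ∧ ∀ i ∈ T, ∀ j ∈ S \ T, f j ≤ f i := by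
  induction s with
  | zero => exact ⟨∅, by simp⟩
  | succ s ih =>
    obtain ⟨T, hTS, hcard, hmax⟩ := ih
    by_cases hc : S.card ≤ s
    · have : T = S := Finset.eq_of_subset_of_card_le hTS (by omega)
      subst this
      exact ⟨T, le_refl _, by omega, by simp⟩
    · have hne : (S \ T).Nonempty := by
        rw [← Finset.card_pos, Finset.card_sdiff_of_subset hTS]; omega
      obtain ⟨j₀, hj₀, hj₀max⟩ := Finset.exists_max_image (S \ T) f hne
      refine ⟨insert j₀ T, ?_, ?_, ?_⟩
      · exact Finset.insert_subset (Finset.mem_sdiff.1 hj₀).1 hTS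
      · rw [Finset.card_insert_of_notMem (Finset.mem_sdiff.1 hj₀).2]; omega
      · intro i hi j hj
        have hj' : j ∈ S \ T := by
          rw [Finset.mem_sdiff] at hj ⊢
          exact ⟨hj.1, fun hjT => hj.2 (Finset.mem_insert_of_mem hjT)⟩
        rcases Finset.mem_insert.1 hi with rfl | hiT
        · exact hj₀max j hj'
        · exact hmax i hiT j hj'

lemma n2_le_of_bound {n : ℕ} (v : Fin n → ℝ) (m : ℝ) (hm : 0 ≤ m) (k : ℕ)
    (hb : ∀ i, |v i| ≤ m) (hk : (suppF v).card ≤ k) :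
    n2 v ≤ Real.sqrt k * m := by
  have h1 : ∑ i, v i ^ 2 = ∑ i ∈ suppF v, v i ^ 2 := by
    refine (Finset.sum_subset (Finset.subset_univ _) ?_).symm
    intro i _ hi
    rw [mem_suppF] at hi
    push_neg at hi
    rw [hi]; ring
  have h2 : ∑ i ∈ suppF v, v i ^ 2 ≤ (k : ℝ) * m ^ 2 := by
    calc ∑ i ∈ suppF v, v i ^ 2 ≤ ∑ _i ∈ suppF v, m ^ 2 := by
          refine Finset.sum_le_sum fun i _ => ?_
          have := hb i
          nlinarith [abs_nonneg (v i), neg_abs_le (v i), le_abs_self (v i)]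
      _ = (suppF v).card * m ^ 2 := by rw [Finset.sum_const, nsmul_eq_mul]
      _ ≤ (k : ℝ) * m ^ 2 := by
          apply mul_le_mul_of_nonneg_right _ (sq_nonneg m)
          exact_mod_cast hk
  have : n2 v ≤ Real.sqrt ((k : ℝ) * m ^ 2) := by
    apply Real.sqrt_le_sqrt
    rw [h1]; exact h2
  calc n2 v ≤ Real.sqrt ((k : ℝ) * m ^ 2) := this
    _ = Real.sqrt k * m := by
        rw [Real.sqrt_mul (Nat.cast_nonneg k), Real.sqrt_sq hm]

lemma decomp {n : ℕ} (s : ℕ) (hs : 1 ≤ s) :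
    ∀ (N : ℕ) (v : Fin n → ℝ) (m : ℝ), 0 ≤ m → (∀ i, |v i| ≤ m) →
    (suppF v).card ≤ N →
    ∃ L : List (Fin n → ℝ), (∀ u ∈ L, (suppF u).card ≤ s) ∧ L.sum = v ∧
      (L.map n2).sum ≤ Real.sqrt s * m + (∑ i, |v i|) / Real.sqrt s := by
  have hsp : (0:ℝ) < Real.sqrt s := Real.sqrt_pos.2 (by exact_mod_cast hs)
  intro N
  induction N with
  | zero =>
    intro v m hm hb hN
    have hv0 : v = 0 := by
      funext i
      by_contra hne
      have : i ∈ suppF v := (mem_suppF v i).2 hne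
      have : 0 < (suppF v).card := Finset.card_pos.2 ⟨i, this⟩
      omega
    refine ⟨[], by simp, by simp [hv0], ?_⟩
    simp only [List.map_nil, List.sum_nil]
    have h1 : (0:ℝ) ≤ Real.sqrt s * m := mul_nonneg hsp.le hm
    have h2 : (0:ℝ) ≤ (∑ i, |v i|) / Real.sqrt s :=
      div_nonneg (Finset.sum_nonneg fun i _ => abs_nonneg _) hsp.le
    linarith
  | succ N ih =>
    intro v m hm hb hN
    set S := suppF v with hS
    by_cases hc : S.card ≤ s
    · refine ⟨[v], by simpa using hc, by simp, ?_⟩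
      simp only [List.map_cons, List.map_nil, List.sum_cons, List.sum_nil, add_zero]
      have h1 : n2 v ≤ Real.sqrt s * m := n2_le_of_bound v m hm s hb hc
      have h2 : (0:ℝ) ≤ (∑ i, |v i|) / Real.sqrt s :=
        div_nonneg (Finset.sum_nonneg fun i _ => abs_nonneg _) hsp.le
      linarith
    · obtain ⟨T, hTS, hTcard, hTmax⟩ := exists_top s S (fun i => |v i|)
      have hTs : T.card = s := by omega
      set vT : Fin n → ℝ := fun i => if i ∈ T then v i else 0 with hvT
      set v' : Fin n → ℝ := fun i => if i ∈ T then 0 else v i with hv'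
      set m' : ℝ := (∑ i ∈ T, |v i|) / s with hm'
      have hm'0 : 0 ≤ m' :=
        div_nonneg (Finset.sum_nonneg fun i _ => abs_nonneg _) (Nat.cast_nonneg s)
      have hb' : ∀ i, |v' i| ≤ m' := by
        intro i
        by_cases hiT : i ∈ T
        · simp only [hv', hiT, if_true, abs_zero]; exact hm'0
        · simp only [hv', hiT, if_false]
          by_cases hiS : i ∈ S
          · have hle : ∀ j ∈ T, |v i| ≤ |v j| :=
              fun j hj => hTmax j hj i (Finset.mem_sdiff.2 ⟨hiS, hiT⟩)
            have hsum : (s : ℝ) * |v i| ≤ ∑ j ∈ T, |v j| := by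
              calc (s : ℝ) * |v i| = ∑ _j ∈ T, |v i| := by
                    rw [Finset.sum_const, nsmul_eq_mul, hTs]
                _ ≤ ∑ j ∈ T, |v j| := Finset.sum_le_sum fun j hj => hle j hj
            rw [hm', le_div_iff₀ (by exact_mod_cast hs : (0:ℝ) < s)]
            linarith
          · have : v i = 0 := by
              by_contra hne
              exact hiS ((mem_suppF v i).2 hne)
            rw [this, abs_zero]; exact hm'0
      have hsupp' : suppF v' ⊆ S \ T := by
        intro i hi
        rw [mem_suppF] at hi
        by_cases hiT : i ∈ T
        · simp only [hv', hiT, if_true] at hi; exact absurd rfl hi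
        · simp only [hv', hiT, if_false] at hi
          exact Finset.mem_sdiff.2 ⟨(mem_suppF v i).2 hi, hiT⟩
      have hN' : (suppF v').card ≤ N := by
        have h1 : (suppF v').card ≤ (S \ T).card := Finset.card_le_card hsupp'
        have h2 : (S \ T).card = S.card - T.card := Finset.card_sdiff_of_subset hTS
        omega
      obtain ⟨L', hL'sp, hL'sum, hL'norm⟩ := ih v' m' hm'0 hb' hN'
      refine ⟨vT :: L', ?_, ?_, ?_⟩
      · intro u hu
        rcases List.mem_cons.1 hu with rfl | hu'
        · refine le_trans (Finset.card_le_card ?_) hTs.le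
          intro i hi
          rw [mem_suppF] at hi
          by_contra hiT
          simp only [hvT, hiT, if_false] at hi
          exact hi rfl
        · exact hL'sp u hu'
      · rw [List.sum_cons, hL'sum]
        funext i
        by_cases hiT : i ∈ T <;> simp [hvT, hv', hiT]
      · rw [List.map_cons, List.sum_cons]
        have hbT : ∀ i, |vT i| ≤ m := by
          intro i
          by_cases hiT : i ∈ T <;> simp only [hvT, hiT, if_true, if_false, abs_zero]
          · exact hb i
          · exact hm
        have hsuppT : (suppF vT).card ≤ s := by
          refine le_trans (Finset.card_le_card ?_) hTs.le
          intro i hi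
          rw [mem_suppF] at hi
          by_contra hiT
          simp only [hvT, hiT, if_false] at hi
          exact hi rfl
        have h1 : n2 vT ≤ Real.sqrt s * m := n2_le_of_bound vT m hm s hbT hsuppT
        have hss : Real.sqrt s * Real.sqrt s = (s : ℝ) :=
          Real.mul_self_sqrt (Nat.cast_nonneg s)
        have hs0 : (s : ℝ) ≠ 0 := by
          exact_mod_cast Nat.one_le_iff_ne_zero.1 hs
        have h2 : Real.sqrt s * m' = (∑ i ∈ T, |v i|) / Real.sqrt s := by
          rw [hm', eq_div_iff (ne_of_gt hsp)]
          calc Real.sqrt s * ((∑ i ∈ T, |v i|) / s) * Real.sqrt s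
              = (∑ i ∈ T, |v i|) * (Real.sqrt s * Real.sqrt s) / s := by ring
            _ = ∑ i ∈ T, |v i| := by rw [hss]; field_simp
        have h3 : (∑ i ∈ T, |v i|) + (∑ i, |v' i|) = ∑ i, |v i| := by
          have e1 : ∑ i ∈ T, |v i| = ∑ i, |vT i| := by
            rw [← Finset.sum_subset (Finset.subset_univ T)
              (fun i _ hi => by simp [hvT, hi])]
            exact Finset.sum_congr rfl fun i hi => by simp [hvT, hi]
          rw [e1, ← Finset.sum_add_distrib]
          refine Finset.sum_congr rfl fun i _ => ?_
          by_cases hiT : i ∈ T <;> simp [hvT, hv', hiT]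
        calc n2 vT + (List.map n2 L').sum
            ≤ Real.sqrt s * m + (Real.sqrt s * m' + (∑ i, |v' i|) / Real.sqrt s) := by
              linarith
          _ = Real.sqrt s * m + (∑ i, |v i|) / Real.sqrt s := by
              rw [h2, ← add_div, h3]

lemma sum_bilin_one {n s : ℕ} {δ : ℝ} (Γ : Matrix (Fin n) (Fin n) ℝ) (hΓ : Γ.IsSymm)
    (h : ∀ v : Fin n → ℝ, Set.ncard {i | v i ≠ 0} ≤ 2 * s →
      Real.sqrt (∑ i, v i ^ 2) ≤ 1 → |v ⬝ᵥ Γ.mulVec v| ≤ δ)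
    (x : Fin n → ℝ) (hx : (suppF x).card ≤ s) :
    ∀ L : List (Fin n → ℝ), (∀ u ∈ L, (suppF u).card ≤ s) →
      |x ⬝ᵥ Γ.mulVec L.sum| ≤ δ * n2 x * (L.map n2).sum := by
  intro L
  induction L with
  | nil => intro _; simp
  | cons u L ih =>
    intro hL
    have h1 := bilin_bound Γ hΓ h x u hx (hL u (List.mem_cons_self))
    have h2 := ih fun w hw => hL w (List.mem_cons_of_mem u hw)
    rw [List.sum_cons, Matrix.mulVec_add, dotProduct_add, List.map_cons, List.sum_cons]
    calc |x ⬝ᵥ Γ.mulVec u + x ⬝ᵥ Γ.mulVec L.sum|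
        ≤ |x ⬝ᵥ Γ.mulVec u| + |x ⬝ᵥ Γ.mulVec L.sum| := abs_add_le _ _
      _ ≤ δ * n2 x * n2 u + δ * n2 x * (L.map n2).sum := add_le_add h1 h2
      _ = δ * n2 x * (n2 u + (L.map n2).sum) := by ring

lemma sum_bilin {n s : ℕ} {δ : ℝ} (Γ : Matrix (Fin n) (Fin n) ℝ) (hΓ : Γ.IsSymm)
    (h : ∀ v : Fin n → ℝ, Set.ncard {i | v i ≠ 0} ≤ 2 * s →
      Real.sqrt (∑ i, v i ^ 2) ≤ 1 → |v ⬝ᵥ Γ.mulVec v| ≤ δ)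
    (L₂ : List (Fin n → ℝ)) (hL₂ : ∀ u ∈ L₂, (suppF u).card ≤ s) :
    ∀ L₁ : List (Fin n → ℝ), (∀ u ∈ L₁, (suppF u).card ≤ s) →
      |L₁.sum ⬝ᵥ Γ.mulVec L₂.sum| ≤ δ * (L₁.map n2).sum * (L₂.map n2).sum := by
  intro L₁
  induction L₁ with
  | nil => intro _; simp
  | cons u L₁ ih =>
    intro hL₁
    have h1 := sum_bilin_one Γ hΓ h u (hL₁ u (List.mem_cons_self)) L₂ hL₂
    have h2 := ih fun w hw => hL₁ w (List.mem_cons_of_mem u hw)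
    rw [List.sum_cons, add_dotProduct, List.map_cons, List.sum_cons]
    calc |u ⬝ᵥ Γ.mulVec L₂.sum + L₁.sum ⬝ᵥ Γ.mulVec L₂.sum|
        ≤ |u ⬝ᵥ Γ.mulVec L₂.sum| + |L₁.sum ⬝ᵥ Γ.mulVec L₂.sum| := abs_add_le _ _
      _ ≤ δ * n2 u * (L₂.map n2).sum + δ * (L₁.map n2).sum * (L₂.map n2).sum :=
          add_le_add h1 h2
      _ = δ * (n2 u + (L₁.map n2).sum) * (L₂.map n2).sum := by ring

/-- If a symmetric matrix `Γ` satisfies `|vᵀΓv| ≤ δ` for all `2s`-sparse vectors `v` in the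
ℓ₂-unit ball, then `|vᵀΓv| ≤ 75 δ ‖v‖₂²` for all `v` with `‖v‖₁ ≤ 4 √s ‖v‖₂`. -/
theorem quadform_bound_on_cone (n s : ℕ) (hs : 1 ≤ s) (δ : ℝ) (hδ : 0 < δ)
    (Γ : Matrix (Fin n) (Fin n) ℝ) (hΓ : Γ.IsSymm)
    (h : ∀ v : Fin n → ℝ, Set.ncard {i | v i ≠ 0} ≤ 2 * s →
      Real.sqrt (∑ i, v i ^ 2) ≤ 1 → |v ⬝ᵥ Γ.mulVec v| ≤ δ) :
    ∀ v : Fin n → ℝ, (∑ i, |v i|) ≤ 4 * Real.sqrt s * Real.sqrt (∑ i, v i ^ 2) →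
      |v ⬝ᵥ Γ.mulVec v| ≤ 75 * δ * ∑ i, v i ^ 2 := by
  intro v hv1
  have hSig : 0 ≤ ∑ i, v i ^ 2 := Finset.sum_nonneg fun i _ => sq_nonneg _
  have hsp : (0:ℝ) < Real.sqrt s := Real.sqrt_pos.2 (by exact_mod_cast hs)
  have hn2v : n2 v = Real.sqrt (∑ i, v i ^ 2) := rfl
  by_cases hc : (suppF v).card ≤ s
  · have hq := quad_scaled Γ h v (by omega)
    nlinarith
  · set S := suppF v with hSdef
    obtain ⟨T, hTS, hTcard, hTmax⟩ := exists_top s S (fun i => |v i|)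
    have hTs : T.card = s := by omega
    set vT : Fin n → ℝ := fun i => if i ∈ T then v i else 0 with hvT
    set v' : Fin n → ℝ := fun i => if i ∈ T then 0 else v i with hv'
    set m' : ℝ := (∑ i ∈ T, |v i|) / s with hm'
    have hm'0 : 0 ≤ m' :=
      div_nonneg (Finset.sum_nonneg fun i _ => abs_nonneg _) (Nat.cast_nonneg s)
    have hb' : ∀ i, |v' i| ≤ m' := by
      intro i
      by_cases hiT : i ∈ T
      · simp only [hv', hiT, if_true, abs_zero]; exact hm'0
      · simp only [hv', hiT, if_false]
        by_cases hiS : i ∈ S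
        · have hle : ∀ j ∈ T, |v i| ≤ |v j| :=
            fun j hj => hTmax j hj i (Finset.mem_sdiff.2 ⟨hiS, hiT⟩)
          have hsum : (s : ℝ) * |v i| ≤ ∑ j ∈ T, |v j| := by
            calc (s : ℝ) * |v i| = ∑ _j ∈ T, |v i| := by
                  rw [Finset.sum_const, nsmul_eq_mul, hTs]
              _ ≤ ∑ j ∈ T, |v j| := Finset.sum_le_sum fun j hj => hle j hj
          rw [hm', le_div_iff₀ (by exact_mod_cast hs : (0:ℝ) < s)]
          linarith
        · have : v i = 0 := by
            by_contra hne
            exact hiS ((mem_suppF v i).2 hne)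
          rw [this, abs_zero]; exact hm'0
    obtain ⟨L', hL'sp, hL'sum, hL'norm⟩ :=
      decomp s hs (suppF v').card v' m' hm'0 hb' (le_refl _)
    set L : List (Fin n → ℝ) := vT :: L' with hL
    have hsuppT : (suppF vT).card ≤ s := by
      refine le_trans (Finset.card_le_card ?_) hTs.le
      intro i hi
      rw [mem_suppF] at hi
      by_contra hiT
      simp only [hvT, hiT, if_false] at hi
      exact hi rfl
    have hLs : ∀ u ∈ L, (suppF u).card ≤ s := by
      intro u hu
      rcases List.mem_cons.1 hu with rfl | hu'
      · exact hsuppT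
      · exact hL'sp u hu'
    have hLsum : L.sum = v := by
      rw [hL, List.sum_cons, hL'sum]
      funext i
      by_cases hiT : i ∈ T <;> simp [hvT, hv', hiT]
    have key := sum_bilin Γ hΓ h L hLs L hLs
    rw [hLsum] at key
    set Sn : ℝ := (L.map n2).sum with hSn
    have hSnnn : 0 ≤ Sn := by
      rw [hSn]
      apply List.sum_nonneg
      intro x hx
      rcases List.mem_map.1 hx with ⟨u, _, rfl⟩
      exact n2_nonneg u
    -- arithmetic identities (as in `decomp`)
    have hss : Real.sqrt s * Real.sqrt s = (s : ℝ) :=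
      Real.mul_self_sqrt (Nat.cast_nonneg s)
    have hs0 : (s : ℝ) ≠ 0 := by
      exact_mod_cast Nat.one_le_iff_ne_zero.1 hs
    have h2 : Real.sqrt s * m' = (∑ i ∈ T, |v i|) / Real.sqrt s := by
      rw [hm', eq_div_iff (ne_of_gt hsp)]
      calc Real.sqrt s * ((∑ i ∈ T, |v i|) / s) * Real.sqrt s
          = (∑ i ∈ T, |v i|) * (Real.sqrt s * Real.sqrt s) / s := by ring
        _ = ∑ i ∈ T, |v i| := by rw [hss]; field_simp
    have h3 : (∑ i ∈ T, |v i|) + (∑ i, |v' i|) = ∑ i, |v i| := by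
      have e1 : ∑ i ∈ T, |v i| = ∑ i, |vT i| := by
        rw [← Finset.sum_subset (Finset.subset_univ T)
          (fun i _ hi => by simp [hvT, hi])]
        exact Finset.sum_congr rfl fun i hi => by simp [hvT, hi]
      rw [e1, ← Finset.sum_add_distrib]
      refine Finset.sum_congr rfl fun i _ => ?_
      by_cases hiT : i ∈ T <;> simp [hvT, hv', hiT]
    have hn2T : n2 vT ≤ n2 v := by
      apply Real.sqrt_le_sqrt
      refine Finset.sum_le_sum fun i _ => ?_
      by_cases hiT : i ∈ T <;> simp [hvT, hiT, sq_nonneg]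
    have hdiv : (∑ i, |v i|) / Real.sqrt s ≤ 4 * n2 v := by
      rw [div_le_iff₀ hsp, hn2v]
      calc ∑ i, |v i| ≤ 4 * Real.sqrt s * Real.sqrt (∑ i, v i ^ 2) := hv1
        _ = 4 * Real.sqrt (∑ i, v i ^ 2) * Real.sqrt s := by ring
    have hSn5 : Sn ≤ 5 * n2 v := by
      have : Sn = n2 vT + (L'.map n2).sum := by rw [hSn, hL, List.map_cons, List.sum_cons]
      rw [this]
      calc n2 vT + (L'.map n2).sum
          ≤ n2 v + (Real.sqrt s * m' + (∑ i, |v' i|) / Real.sqrt s) := by linarith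
        _ = n2 v + (∑ i, |v i|) / Real.sqrt s := by
            rw [h2, ← add_div, h3]
        _ ≤ n2 v + 4 * n2 v := by linarith
        _ = 5 * n2 v := by ring
    have hsq : Sn * Sn ≤ 25 * n2 v ^ 2 := by nlinarith [n2_nonneg v]
    have hfin : δ * (Sn * Sn) ≤ δ * (25 * n2 v ^ 2) :=
      mul_le_mul_of_nonneg_left hsq hδ.le
    have hv2 : n2 v ^ 2 = ∑ i, v i ^ 2 := sq_n2 v
    calc |v ⬝ᵥ Γ.mulVec v| ≤ δ * Sn * Sn := key
      _ = δ * (Sn * Sn) := by ring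
      _ ≤ δ * (25 * n2 v ^ 2) := hfin
      _ = 25 * δ * ∑ i, v i ^ 2 := by rw [hv2]; ring
      _ ≤ 75 * δ * ∑ i, v i ^ 2 := by nlinarith
end

section
/- Let Γ̂ and Γ be symmetric n×n matrices and δ > 0. Suppose vᵀΓv ≥ δ‖v‖₂² for all v with ‖v‖₁ ≤ 4√s‖v‖₂, and |vᵀ(Γ̂ - Γ)v| ≤ δ/150 for all v with ‖v‖₀ ≤ 2s and ‖v‖₂ ≤ 1. Then vᵀΓ̂v ≥ (δ/2)‖v‖₂² for all v with ‖v‖₁ ≤ 4√s‖v‖₂. -/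
open Matrix

private lemma bilin_symm' {n : ℕ} {Δ : Matrix (Fin n) (Fin n) ℝ} (h : Δ.IsSymm)
    (x y : Fin n → ℝ) : x ⬝ᵥ Δ.mulVec y = y ⬝ᵥ Δ.mulVec x := by
  simp only [dotProduct, Matrix.mulVec, dotProduct, Finset.mul_sum]
  rw [Finset.sum_comm]
  refine Finset.sum_congr rfl fun i _ => Finset.sum_congr rfl fun j _ => ?_
  rw [h.apply i j]; ring

private lemma dot_sum_left' {n : ℕ} (s : Finset ℕ) (f : ℕ → Fin n → ℝ) (v : Fin n → ℝ) :
    (∑ k ∈ s, f k) ⬝ᵥ v = ∑ k ∈ s, f k ⬝ᵥ v := by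
  simp only [dotProduct, Finset.sum_apply, Finset.sum_mul]
  rw [Finset.sum_comm]

private lemma dot_sum_right' {n : ℕ} (s : Finset ℕ) (f : ℕ → Fin n → ℝ) (v : Fin n → ℝ) :
    v ⬝ᵥ (∑ k ∈ s, f k) = ∑ k ∈ s, v ⬝ᵥ f k := by
  simp only [dotProduct, Finset.sum_apply, Finset.mul_sum]
  rw [Finset.sum_comm]

private lemma sum_chunks' (s : ℕ) (f : ℕ → ℝ) (K : ℕ) :
    ∑ k ∈ Finset.range K, ∑ m ∈ Finset.Ico (k*s) ((k+1)*s), f m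
      = ∑ m ∈ Finset.range (K*s), f m := by
  induction K with
  | zero => simp
  | succ K ih =>
    rw [Finset.sum_range_succ, ih, Finset.range_eq_Ico,
      Finset.sum_Ico_consecutive f (Nat.zero_le (K*s))
        (Nat.mul_le_mul (Nat.le_succ K) le_rfl : K*s ≤ (K+1)*s), ← Finset.range_eq_Ico]

private lemma div_eq_iff_mem_Ico' {s : ℕ} (hs : 1 ≤ s) (m k : ℕ) :
    m / s = k ↔ (k * s ≤ m ∧ m < (k+1) * s) := by
  constructor
  · rintro rfl
    refine ⟨Nat.div_mul_le_self m s, ?_⟩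
    have h2 : m % s < s := Nat.mod_lt m (by omega)
    have h3 : m < s * (m / s) + s := by
      conv_lhs => rw [← Nat.div_add_mod m s]
      exact Nat.add_lt_add_left h2 _
    calc m < s * (m / s) + s := h3
      _ = (m / s + 1) * s := by ring
  · rintro ⟨h1, h2⟩
    exact Nat.div_eq_of_lt_le h1 h2

/-- Key chunking estimate: if `|w|` is antitone and vanishes from `K` on, the sum of the
ℓ2 norms of the `s`-chunks of `w` is at most `‖w‖₂ + ‖w‖₁/√s`. -/
private lemma chunk_l2_bound' (s : ℕ) (hs : 1 ≤ s) (w : ℕ → ℝ)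
    (hanti : ∀ j m : ℕ, j ≤ m → |w m| ≤ |w j|) (K : ℕ) (hwz : ∀ m, K ≤ m → w m = 0) :
    ∑ k ∈ Finset.range K, Real.sqrt (∑ m ∈ Finset.Ico (k*s) ((k+1)*s), (w m)^2)
      ≤ Real.sqrt (∑ m ∈ Finset.range K, (w m)^2)
        + (∑ m ∈ Finset.range K, |w m|) / Real.sqrt s := by
  have hs0 : (0:ℝ) < s := by exact_mod_cast hs
  have hss : (0:ℝ) < Real.sqrt s := Real.sqrt_pos.mpr hs0
  set L : ℕ → ℝ := fun k => ∑ m ∈ Finset.Ico (k*s) ((k+1)*s), |w m| with hL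
  set Q : ℕ → ℝ := fun k => ∑ m ∈ Finset.Ico (k*s) ((k+1)*s), (w m)^2 with hQ
  have hLnn : ∀ k, 0 ≤ L k := fun k => Finset.sum_nonneg fun m _ => abs_nonneg _
  have hQnn : ∀ k, 0 ≤ Q k := fun k => Finset.sum_nonneg fun m _ => sq_nonneg _
  -- key per-chunk bound
  have hQL : ∀ k, Q (k+1) * s ≤ L k * L (k+1) := by
    intro k
    have hcard : (Finset.Ico (k*s) ((k+1)*s)).card = s := by
      rw [Nat.card_Ico]
      have : (k+1)*s = k*s + s := by ring
      omega
    have h1 : Q (k+1) * s = ∑ j ∈ Finset.Ico (k*s) ((k+1)*s),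
        ∑ m ∈ Finset.Ico ((k+1)*s) ((k+2)*s), (w m)^2 := by
      rw [Finset.sum_const, hcard, nsmul_eq_mul]
      have : Q (k+1) = ∑ m ∈ Finset.Ico ((k+1)*s) ((k+2)*s), (w m)^2 := by
        simp only [hQ]
      rw [this]; ring
    rw [h1, Finset.sum_mul_sum]
    refine Finset.sum_le_sum fun j hj => Finset.sum_le_sum fun m hm => ?_
    have hjm : j ≤ m := by
      rw [Finset.mem_Ico] at hj hm
      omega
    have habs : |w m| ≤ |w j| := hanti j m hjm
    calc (w m)^2 = |w m| * |w m| := by rw [← sq_abs]; ring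
      _ ≤ |w j| * |w m| := mul_le_mul_of_nonneg_right habs (abs_nonneg _)
  have hsqrtQ : ∀ k, Real.sqrt (Q (k+1)) ≤ (L k + L (k+1)) / (2 * Real.sqrt s) := by
    intro k
    have h4 : Q (k+1) ≤ ((L k + L (k+1)) / (2 * Real.sqrt s))^2 := by
      have hsq : ((L k + L (k+1)) / (2 * Real.sqrt s))^2 = (L k + L (k+1))^2 / (4*s) := by
        rw [div_pow, mul_pow, Real.sq_sqrt hs0.le]; norm_num
      rw [hsq, le_div_iff₀ (by positivity)]
      nlinarith [sq_nonneg (L k - L (k+1)), hQL k, hQnn (k+1), hs0]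
    calc Real.sqrt (Q (k+1)) ≤ Real.sqrt (((L k + L (k+1)) / (2 * Real.sqrt s))^2) :=
          Real.sqrt_le_sqrt h4
      _ = (L k + L (k+1)) / (2 * Real.sqrt s) :=
          Real.sqrt_sq (by positivity)
  rcases K with _ | K
  · simp
  -- extension lemmas
  have hext2 : ∀ M, K+1 ≤ M → ∑ m ∈ Finset.range M, (w m)^2 = ∑ m ∈ Finset.range (K+1), (w m)^2 := by
    intro M hM
    refine (Finset.sum_subset (Finset.range_subset_range.mpr hM) fun m _ hm => ?_).symm
    rw [hwz m (by simpa using hm)]; ring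
  have hext1 : ∀ M, K+1 ≤ M → ∑ m ∈ Finset.range M, |w m| = ∑ m ∈ Finset.range (K+1), |w m| := by
    intro M hM
    refine (Finset.sum_subset (Finset.range_subset_range.mpr hM) fun m _ hm => ?_).symm
    rw [hwz m (by simpa using hm)]; simp
  -- first chunk
  have hQ0 : Real.sqrt (Q 0) ≤ Real.sqrt (∑ m ∈ Finset.range (K+1), (w m)^2) := by
    apply Real.sqrt_le_sqrt
    have : Q 0 = ∑ m ∈ Finset.range s, (w m)^2 := by
      simp only [hQ]; rw [Finset.range_eq_Ico]; norm_num
    rw [this, ← hext2 (s + (K+1)) (by omega)]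
    exact Finset.sum_le_sum_of_subset_of_nonneg
      (Finset.range_subset_range.mpr (by omega)) (fun m _ _ => sq_nonneg _)
  -- remaining chunks
  have hLsum : ∑ k ∈ Finset.range (K+1), L k = ∑ m ∈ Finset.range (K+1), |w m| := by
    simp only [hL]
    rw [sum_chunks' s (fun m => |w m|) (K+1)]
    exact hext1 _ (Nat.le_mul_of_pos_right (K+1) (by omega))
  have htail : ∑ k ∈ Finset.range K, Real.sqrt (Q (k+1))
      ≤ (∑ m ∈ Finset.range (K+1), |w m|) / Real.sqrt s := by
    calc ∑ k ∈ Finset.range K, Real.sqrt (Q (k+1))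
        ≤ ∑ k ∈ Finset.range K, (L k + L (k+1)) / (2 * Real.sqrt s) :=
          Finset.sum_le_sum fun k _ => hsqrtQ k
      _ = ((∑ k ∈ Finset.range K, L k) + (∑ k ∈ Finset.range K, L (k+1))) / (2 * Real.sqrt s) := by
          rw [← Finset.sum_add_distrib, Finset.sum_div]
      _ ≤ (2 * ∑ k ∈ Finset.range (K+1), L k) / (2 * Real.sqrt s) := by
          have hA : ∑ k ∈ Finset.range K, L k ≤ ∑ k ∈ Finset.range (K+1), L k := by
            rw [Finset.sum_range_succ]; linarith [hLnn K]
          have hB : ∑ k ∈ Finset.range K, L (k+1) ≤ ∑ k ∈ Finset.range (K+1), L k := by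
            rw [Finset.sum_range_succ' L K]; linarith [hLnn 0]
          gcongr
          linarith
      _ = (∑ m ∈ Finset.range (K+1), |w m|) / Real.sqrt s := by
          rw [hLsum]; field_simp
  calc ∑ k ∈ Finset.range (K+1), Real.sqrt (Q k)
      = ∑ k ∈ Finset.range K, Real.sqrt (Q (k+1)) + Real.sqrt (Q 0) := Finset.sum_range_succ' _ _
    _ ≤ Real.sqrt (∑ m ∈ Finset.range (K+1), (w m)^2)
        + (∑ m ∈ Finset.range (K+1), |w m|) / Real.sqrt s := by
          have := htail; have := hQ0; linarith

private lemma quad_scale' {n : ℕ} (Δ : Matrix (Fin n) (Fin n) ℝ) (c : ℝ) (u : Fin n → ℝ) :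
    (c • u) ⬝ᵥ Δ.mulVec (c • u) = c^2 * (u ⬝ᵥ Δ.mulVec u) := by
  rw [Matrix.mulVec_smul, dotProduct_smul, smul_dotProduct, smul_eq_mul, smul_eq_mul]; ring

private lemma supp_smul' {n : ℕ} {c : ℝ} (hc : c ≠ 0) (u : Fin n → ℝ) :
    {i | (c • u) i ≠ 0} = {i | u i ≠ 0} := by
  ext i
  simp [Pi.smul_apply, smul_eq_mul, mul_eq_zero, hc]

private lemma sum_sq_smul' {n : ℕ} (c : ℝ) (u : Fin n → ℝ) :
    ∑ i, ((c • u) i)^2 = c^2 * ∑ i, u i ^ 2 := by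
  rw [Finset.mul_sum]
  exact Finset.sum_congr rfl fun i _ => by simp [Pi.smul_apply, smul_eq_mul]; ring

private lemma quad_sparse_bound' {n s : ℕ} {δ : ℝ}
    {Δ : Matrix (Fin n) (Fin n) ℝ}
    (hdev : ∀ u : Fin n → ℝ, Set.ncard {i | u i ≠ 0} ≤ 2 * s →
      Real.sqrt (∑ i, u i ^ 2) ≤ 1 → |u ⬝ᵥ Δ.mulVec u| ≤ δ / 150) :
    ∀ u : Fin n → ℝ, Set.ncard {i | u i ≠ 0} ≤ 2 * s →
      |u ⬝ᵥ Δ.mulVec u| ≤ δ / 150 * ∑ i, u i ^ 2 := by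
  intro u hu
  rcases eq_or_ne (∑ i, u i ^ 2) 0 with h0 | h0
  · have hu0 : u = 0 := by
      funext i
      have := (Finset.sum_eq_zero_iff_of_nonneg (fun i _ => sq_nonneg (u i))).mp h0 i
        (Finset.mem_univ i)
      exact pow_eq_zero_iff (two_ne_zero) |>.mp this
    simp [hu0, h0]
  · have hnn : (0:ℝ) ≤ ∑ i, u i ^ 2 := Finset.sum_nonneg fun i _ => sq_nonneg _
    have hpos : 0 < ∑ i, u i ^ 2 := lt_of_le_of_ne hnn (Ne.symm h0)
    set r := Real.sqrt (∑ i, u i ^ 2) with hr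
    have hrpos : 0 < r := Real.sqrt_pos.mpr hpos
    have hr2 : r ^ 2 = ∑ i, u i ^ 2 := Real.sq_sqrt hnn
    have hsum : ∑ i, ((r⁻¹ • u) i)^2 = 1 := by
      rw [sum_sq_smul', ← hr2]; field_simp
    have h2 : |u ⬝ᵥ Δ.mulVec u| = r^2 * |(r⁻¹ • u) ⬝ᵥ Δ.mulVec (r⁻¹ • u)| := by
      rw [quad_scale', abs_mul, abs_of_nonneg (by positivity : (0:ℝ) ≤ r⁻¹^2)]
      field_simp
    calc |u ⬝ᵥ Δ.mulVec u| = r^2 * |(r⁻¹ • u) ⬝ᵥ Δ.mulVec (r⁻¹ • u)| := h2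
      _ ≤ r^2 * (δ/150) := by
          refine mul_le_mul_of_nonneg_left ?_ (by positivity)
          refine hdev _ ?_ ?_
          · rw [supp_smul' (inv_ne_zero hrpos.ne') u]; exact hu
          · rw [hsum]; simp
      _ = δ/150 * ∑ i, u i ^ 2 := by rw [hr2]; ring

private lemma cross_sparse_bound' {n s : ℕ} {δ : ℝ}
    {Δ : Matrix (Fin n) (Fin n) ℝ} (hΔs : Δ.IsSymm)
    (hdev : ∀ u : Fin n → ℝ, Set.ncard {i | u i ≠ 0} ≤ 2 * s →
      Real.sqrt (∑ i, u i ^ 2) ≤ 1 → |u ⬝ᵥ Δ.mulVec u| ≤ δ / 150) :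
    ∀ x y : Fin n → ℝ, Set.ncard {i | x i ≠ 0} ≤ s → Set.ncard {i | y i ≠ 0} ≤ s →
      |x ⬝ᵥ Δ.mulVec y| ≤ δ / 150 * (Real.sqrt (∑ i, x i ^ 2) * Real.sqrt (∑ i, y i ^ 2)) := by
  have hquad := quad_sparse_bound' (s := s) hdev
  -- polarization identity
  have hpol : ∀ a b : Fin n → ℝ,
      4 * (a ⬝ᵥ Δ.mulVec b) = (a+b) ⬝ᵥ Δ.mulVec (a+b) - (a-b) ⬝ᵥ Δ.mulVec (a-b) := by
    intro a b
    have hsym := bilin_symm' hΔs a b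
    simp only [Matrix.mulVec_add, Matrix.mulVec_sub, dotProduct_add, dotProduct_sub,
      add_dotProduct, sub_dotProduct]
    linarith [hsym]
  -- unit-norm cross bound
  have hunit : ∀ a b : Fin n → ℝ, Set.ncard {i | a i ≠ 0} ≤ s → Set.ncard {i | b i ≠ 0} ≤ s →
      (∑ i, a i ^ 2) = 1 → (∑ i, b i ^ 2) = 1 → |a ⬝ᵥ Δ.mulVec b| ≤ δ / 150 := by
    intro a b ha hb ha1 hb1
    have hsupp : ∀ (u v : Fin n → ℝ), {i | (u + v) i ≠ 0} ⊆ {i | u i ≠ 0} ∪ {i | v i ≠ 0} := by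
      intro u v i hi
      simp only [Set.mem_union, Set.mem_setOf_eq] at *
      by_contra h
      push_neg at h
      exact hi (by simp [Pi.add_apply, h.1, h.2])
    have hcard : ∀ (u v : Fin n → ℝ), Set.ncard {i | u i ≠ 0} ≤ s → Set.ncard {i | v i ≠ 0} ≤ s →
        Set.ncard {i | (u + v) i ≠ 0} ≤ 2 * s := by
      intro u v hu hv
      calc Set.ncard {i | (u + v) i ≠ 0}
          ≤ ({i | u i ≠ 0} ∪ {i | v i ≠ 0}).ncard :=
            Set.ncard_le_ncard (hsupp u v) (Set.toFinite _)
        _ ≤ {i | u i ≠ 0}.ncard + {i | v i ≠ 0}.ncard := Set.ncard_union_le _ _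
        _ ≤ 2 * s := by omega
    have hbneg : Set.ncard {i | (-b) i ≠ 0} ≤ s := by
      have : {i | (-b) i ≠ 0} = {i | b i ≠ 0} := by ext i; simp
      rw [this]; exact hb
    have hq1 := hquad (a + b) (hcard a b ha hb)
    have hq2 := hquad (a - b) (by
      have : a - b = a + (-b) := by ring
      rw [this]; exact hcard a (-b) ha hbneg)
    have hpar : ∑ i, ((a+b) i)^2 + ∑ i, ((a-b) i)^2 = 2 * ∑ i, a i ^2 + 2 * ∑ i, b i ^2 := by
      rw [← Finset.sum_add_distrib, Finset.mul_sum, Finset.mul_sum, ← Finset.sum_add_distrib]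
      exact Finset.sum_congr rfl fun i _ => by simp [Pi.add_apply, Pi.sub_apply]; ring
    have h4 := hpol a b
    have habs : |4 * (a ⬝ᵥ Δ.mulVec b)| ≤ 4 * (δ/150) := by
      rw [h4]
      have := abs_sub ((a+b) ⬝ᵥ Δ.mulVec (a+b)) ((a-b) ⬝ᵥ Δ.mulVec (a-b))
      calc |(a+b) ⬝ᵥ Δ.mulVec (a+b) - (a-b) ⬝ᵥ Δ.mulVec (a-b)|
          ≤ |(a+b) ⬝ᵥ Δ.mulVec (a+b)| + |(a-b) ⬝ᵥ Δ.mulVec (a-b)| := abs_sub _ _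
        _ ≤ δ/150 * ∑ i, ((a+b) i)^2 + δ/150 * ∑ i, ((a-b) i)^2 := add_le_add hq1 hq2
        _ = δ/150 * (∑ i, ((a+b) i)^2 + ∑ i, ((a-b) i)^2) := by ring
        _ = 4 * (δ/150) := by rw [hpar, ha1, hb1]; ring
    rw [abs_mul, abs_of_nonneg (by norm_num : (0:ℝ) ≤ 4)] at habs
    linarith
  -- general case by scaling
  intro x y hx hy
  have hxnn : (0:ℝ) ≤ ∑ i, x i ^ 2 := Finset.sum_nonneg fun i _ => sq_nonneg _
  have hynn : (0:ℝ) ≤ ∑ i, y i ^ 2 := Finset.sum_nonneg fun i _ => sq_nonneg _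
  rcases eq_or_ne (∑ i, x i ^ 2) 0 with h0 | h0
  · have hx0 : x = 0 := by
      funext i
      have := (Finset.sum_eq_zero_iff_of_nonneg (fun i _ => sq_nonneg (x i))).mp h0 i
        (Finset.mem_univ i)
      exact pow_eq_zero_iff (two_ne_zero) |>.mp this
    simp [hx0, h0]
  rcases eq_or_ne (∑ i, y i ^ 2) 0 with h0' | h0'
  · have hy0 : y = 0 := by
      funext i
      have := (Finset.sum_eq_zero_iff_of_nonneg (fun i _ => sq_nonneg (y i))).mp h0' i
        (Finset.mem_univ i)
      exact pow_eq_zero_iff (two_ne_zero) |>.mp this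
    simp [hy0, h0']
  have hxpos : 0 < ∑ i, x i ^ 2 := lt_of_le_of_ne hxnn (Ne.symm h0)
  have hypos : 0 < ∑ i, y i ^ 2 := lt_of_le_of_ne hynn (Ne.symm h0')
  set a := Real.sqrt (∑ i, x i ^ 2) with hadef
  set b := Real.sqrt (∑ i, y i ^ 2) with hbdef
  have hapos : 0 < a := Real.sqrt_pos.mpr hxpos
  have hbpos : 0 < b := Real.sqrt_pos.mpr hypos
  have ha2 : a ^ 2 = ∑ i, x i ^ 2 := Real.sq_sqrt hxnn
  have hb2 : b ^ 2 = ∑ i, y i ^ 2 := Real.sq_sqrt hynn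
  have hxs : ∑ i, ((a⁻¹ • x) i)^2 = 1 := by rw [sum_sq_smul', ← ha2]; field_simp
  have hys : ∑ i, ((b⁻¹ • y) i)^2 = 1 := by rw [sum_sq_smul', ← hb2]; field_simp
  have hkey := hunit (a⁻¹ • x) (b⁻¹ • y)
    (by rw [supp_smul' (inv_ne_zero hapos.ne') x]; exact hx)
    (by rw [supp_smul' (inv_ne_zero hbpos.ne') y]; exact hy) hxs hys
  have hscale : (a⁻¹ • x) ⬝ᵥ Δ.mulVec (b⁻¹ • y) = a⁻¹ * b⁻¹ * (x ⬝ᵥ Δ.mulVec y) := by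
    rw [Matrix.mulVec_smul, dotProduct_smul, smul_dotProduct, smul_eq_mul, smul_eq_mul]; ring
  rw [hscale, abs_mul, abs_of_nonneg (by positivity : (0:ℝ) ≤ a⁻¹ * b⁻¹)] at hkey
  calc |x ⬝ᵥ Δ.mulVec y| = (a * b) * (a⁻¹ * b⁻¹ * |x ⬝ᵥ Δ.mulVec y|) := by field_simp
    _ ≤ (a * b) * (δ/150) := mul_le_mul_of_nonneg_left hkey (by positivity)
    _ = δ/150 * (a * b) := by ring

/-- Restricted eigenvalue transfer on the cone: if `vᵀΓv ≥ δ‖v‖₂²` for all `v` with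
`‖v‖₁ ≤ 4√s‖v‖₂`, and `|vᵀ(Γ̂ - Γ)v| ≤ δ/150` for all `2s`-sparse `v` in the ℓ₂-unit ball,
then `vᵀΓ̂v ≥ (δ/2)‖v‖₂²` for all `v` with `‖v‖₁ ≤ 4√s‖v‖₂`. -/
theorem restricted_eigenvalue_transfer_cone (n s : ℕ) (hs : 1 ≤ s) (δ : ℝ) (hδ : 0 < δ)
    (Γhat Γ : Matrix (Fin n) (Fin n) ℝ) (hΓhat : Γhat.IsSymm) (hΓ : Γ.IsSymm)
    (hlow : ∀ v : Fin n → ℝ, (∑ i, |v i|) ≤ 4 * Real.sqrt s * Real.sqrt (∑ i, v i ^ 2) →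
      δ * ∑ i, v i ^ 2 ≤ v ⬝ᵥ Γ.mulVec v)
    (hdev : ∀ v : Fin n → ℝ, Set.ncard {i | v i ≠ 0} ≤ 2 * s →
      Real.sqrt (∑ i, v i ^ 2) ≤ 1 → |v ⬝ᵥ (Γhat - Γ).mulVec v| ≤ δ / 150) :
    ∀ v : Fin n → ℝ, (∑ i, |v i|) ≤ 4 * Real.sqrt s * Real.sqrt (∑ i, v i ^ 2) →
      δ / 2 * ∑ i, v i ^ 2 ≤ v ⬝ᵥ Γhat.mulVec v := by
  classical
  intro v hv
  have hs0 : (0:ℝ) < s := by exact_mod_cast hs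
  have hss : (0:ℝ) < Real.sqrt s := Real.sqrt_pos.mpr hs0
  have hv2 : (0:ℝ) ≤ ∑ i, v i ^ 2 := Finset.sum_nonneg fun i _ => sq_nonneg _
  set Δ := Γhat - Γ with hΔdef
  have hΔs : Δ.IsSymm := hΓhat.sub hΓ
  have hcross := cross_sparse_bound' (s := s) (δ := δ) hΔs hdev
  -- sorting
  set σ : Equiv.Perm (Fin n) := Tuple.sort (fun i => -|v i|) with hσ
  have hmono : Monotone ((fun i => -|v i|) ∘ σ) := Tuple.monotone_sort _
  set w : ℕ → ℝ := fun m => if h : m < n then v (σ ⟨m, h⟩) else 0 with hw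
  have hwanti : ∀ j m : ℕ, j ≤ m → |w m| ≤ |w j| := by
    intro j m hjm
    by_cases hm : m < n
    · have hj : j < n := lt_of_le_of_lt hjm hm
      have h1 := hmono (Fin.mk_le_mk.mpr hjm : (⟨j, hj⟩ : Fin n) ≤ ⟨m, hm⟩)
      simp only [Function.comp_apply] at h1
      simp only [hw, dif_pos hm, dif_pos hj]
      linarith
    · simp only [hw, dif_neg hm, abs_zero]
      exact abs_nonneg _
  have hwz : ∀ m, n ≤ m → w m = 0 := fun m hm => by simp [hw, Nat.not_lt.mpr hm]
  -- chunk vectors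
  set X : ℕ → Fin n → ℝ := fun k i => if ((σ.symm i : ℕ) / s = k) then v i else 0 with hX
  have hdecomp : v = ∑ k ∈ Finset.range n, X k := by
    funext i
    rw [Finset.sum_apply]
    have hlt : (σ.symm i : ℕ) / s < n := lt_of_le_of_lt (Nat.div_le_self _ _) (σ.symm i).isLt
    simp only [hX]
    rw [Finset.sum_ite_eq (Finset.range n) ((σ.symm i : ℕ)/s) (fun _ => v i)]
    simp [hlt]
  have hXsparse : ∀ k, Set.ncard {i | X k i ≠ 0} ≤ s := by
    intro k
    have hsub : {i : Fin n | X k i ≠ 0} ⊆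
        ↑(Finset.univ.filter fun i : Fin n => (σ.symm i : ℕ)/s = k) := by
      intro i hi
      simp only [Set.mem_setOf_eq, hX] at hi
      simp only [Finset.coe_filter, Finset.mem_univ, true_and, Set.mem_setOf_eq]
      by_contra h
      exact hi (if_neg h)
    refine le_trans (Set.ncard_le_ncard hsub (Finset.finite_toSet _)) ?_
    rw [Set.ncard_coe_finset]
    have hcard := Finset.card_le_card_of_injOn
      (s := Finset.univ.filter fun i : Fin n => (σ.symm i : ℕ)/s = k)
      (t := Finset.Ico (k*s) ((k+1)*s))
      (fun i : Fin n => (σ.symm i : ℕ))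
      (fun a ha => by
        simp only [Finset.mem_coe, Finset.mem_filter, Finset.mem_univ, true_and] at ha
        rw [Finset.mem_coe, Finset.mem_Ico]
        exact (div_eq_iff_mem_Ico' hs _ k).mp ha)
      (fun a _ b _ hab => σ.symm.injective (Fin.val_injective hab))
    have hIco : (Finset.Ico (k*s) ((k+1)*s)).card = s := by
      rw [Nat.card_Ico]
      have : (k+1)*s = k*s + s := by ring
      omega
    omega
  have hXQ : ∀ k, ∑ i, (X k i)^2 = ∑ m ∈ Finset.Ico (k*s) ((k+1)*s), (w m)^2 := by
    intro k
    have h2 : ∀ i : Fin n, (X k (σ i))^2 = if (i : ℕ) / s = k then (w (i:ℕ))^2 else 0 := by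
      intro i
      simp only [hX, Equiv.symm_apply_apply, hw]
      by_cases hik : (i : ℕ)/s = k
      · rw [if_pos hik, if_pos hik, dif_pos i.isLt]
      · rw [if_neg hik, if_neg hik]
        norm_num
    have h1 : ∑ m ∈ Finset.range n, (if m / s = k then (w m)^2 else 0) = ∑ i, (X k i)^2 := by
      rw [← Fin.sum_univ_eq_sum_range (fun m => if m / s = k then (w m)^2 else 0) n,
          ← Equiv.sum_comp σ (fun i => (X k i)^2)]
      exact Finset.sum_congr rfl fun i _ => (h2 i).symm
    rw [← h1, ← Finset.sum_filter]
    apply Finset.sum_subset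
    · intro m hm
      simp only [Finset.mem_filter, Finset.mem_range] at hm
      rw [Finset.mem_Ico]
      exact (div_eq_iff_mem_Ico' hs m k).mp hm.2
    · intro m hm hnm
      have hk : m / s = k := (div_eq_iff_mem_Ico' hs m k).mpr (Finset.mem_Ico.mp hm)
      have hmn : ¬ m < n := fun hc => hnm (Finset.mem_filter.mpr ⟨Finset.mem_range.mpr hc, hk⟩)
      have : w m = 0 := by simp [hw, hmn]
      rw [this]; ring
  have hl1 : ∑ m ∈ Finset.range n, |w m| = ∑ i, |v i| := by
    rw [← Fin.sum_univ_eq_sum_range (fun m => |w m|) n, ← Equiv.sum_comp σ (fun i => |v i|)]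
    exact Finset.sum_congr rfl fun i _ => by simp only [hw, dif_pos i.isLt]
  have hl2 : ∑ m ∈ Finset.range n, (w m)^2 = ∑ i, v i ^ 2 := by
    rw [← Fin.sum_univ_eq_sum_range (fun m => (w m)^2) n, ← Equiv.sum_comp σ (fun i => v i ^ 2)]
    exact Finset.sum_congr rfl fun i _ => by simp only [hw, dif_pos i.isLt]
  have hchunk := chunk_l2_bound' s hs w hwanti n hwz
  rw [hl1, hl2] at hchunk
  have hS : ∑ k ∈ Finset.range n, Real.sqrt (∑ i, (X k i)^2) ≤ 5 * Real.sqrt (∑ i, v i ^ 2) := by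
    calc ∑ k ∈ Finset.range n, Real.sqrt (∑ i, (X k i)^2)
        = ∑ k ∈ Finset.range n, Real.sqrt (∑ m ∈ Finset.Ico (k*s) ((k+1)*s), (w m)^2) :=
          Finset.sum_congr rfl fun k _ => by rw [hXQ k]
      _ ≤ Real.sqrt (∑ i, v i ^ 2) + (∑ i, |v i|) / Real.sqrt s := hchunk
      _ ≤ Real.sqrt (∑ i, v i ^ 2)
          + (4 * Real.sqrt s * Real.sqrt (∑ i, v i ^ 2)) / Real.sqrt s := by gcongr
      _ = 5 * Real.sqrt (∑ i, v i ^ 2) := by field_simp; ring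
  have hexp : v ⬝ᵥ Δ.mulVec v
      = ∑ k ∈ Finset.range n, ∑ l ∈ Finset.range n, (X k) ⬝ᵥ Δ.mulVec (X l) := by
    conv_lhs => rw [hdecomp]
    rw [dot_sum_left']
    refine Finset.sum_congr rfl fun k _ => ?_
    have hmv : Δ.mulVec (∑ l ∈ Finset.range n, X l) = ∑ l ∈ Finset.range n, Δ.mulVec (X l) := by
      simp only [← Matrix.mulVecLin_apply]
      exact map_sum (Matrix.mulVecLin Δ) X (Finset.range n)
    rw [hmv, dot_sum_right']
  have habs : |v ⬝ᵥ Δ.mulVec v| ≤ δ/6 * ∑ i, v i ^ 2 := by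
    rw [hexp]
    have hann : ∀ k : ℕ, 0 ≤ Real.sqrt (∑ i, (X k i)^2) := fun k => Real.sqrt_nonneg _
    calc |∑ k ∈ Finset.range n, ∑ l ∈ Finset.range n, (X k) ⬝ᵥ Δ.mulVec (X l)|
        ≤ ∑ k ∈ Finset.range n, |∑ l ∈ Finset.range n, (X k) ⬝ᵥ Δ.mulVec (X l)| :=
          Finset.abs_sum_le_sum_abs _ _
      _ ≤ ∑ k ∈ Finset.range n, ∑ l ∈ Finset.range n, |(X k) ⬝ᵥ Δ.mulVec (X l)| :=
          Finset.sum_le_sum fun k _ => Finset.abs_sum_le_sum_abs _ _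
      _ ≤ ∑ k ∈ Finset.range n, ∑ l ∈ Finset.range n,
            δ/150 * (Real.sqrt (∑ i, (X k i)^2) * Real.sqrt (∑ i, (X l i)^2)) :=
          Finset.sum_le_sum fun k _ => Finset.sum_le_sum fun l _ =>
            hcross (X k) (X l) (hXsparse k) (hXsparse l)
      _ = δ/150 * ((∑ k ∈ Finset.range n, Real.sqrt (∑ i, (X k i)^2))
            * (∑ l ∈ Finset.range n, Real.sqrt (∑ i, (X l i)^2))) := by
          rw [Finset.sum_mul_sum, Finset.mul_sum]
          exact Finset.sum_congr rfl fun k _ => by rw [Finset.mul_sum]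
      _ ≤ δ/150 * ((5 * Real.sqrt (∑ i, v i ^ 2)) * (5 * Real.sqrt (∑ i, v i ^ 2))) := by
          have hSn : 0 ≤ ∑ k ∈ Finset.range n, Real.sqrt (∑ i, (X k i)^2) :=
            Finset.sum_nonneg fun k _ => hann k
          have hmm := mul_le_mul hS hS hSn (by positivity)
          exact mul_le_mul_of_nonneg_left hmm (by positivity)
      _ = δ/6 * ∑ i, v i ^ 2 := by
          rw [show (5 * Real.sqrt (∑ i, v i ^ 2)) * (5 * Real.sqrt (∑ i, v i ^ 2))
              = 25 * (Real.sqrt (∑ i, v i ^ 2))^2 by ring, Real.sq_sqrt hv2]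
          ring
  have hΓeq : v ⬝ᵥ Γhat.mulVec v = v ⬝ᵥ Γ.mulVec v + v ⬝ᵥ Δ.mulVec v := by
    have h : Γhat = Γ + Δ := by rw [hΔdef]; abel
    conv_lhs => rw [h]
    rw [Matrix.add_mulVec, dotProduct_add]
  have hlb := hlow v hv
  have h1 := (abs_le.mp habs).1
  have hδT : 0 ≤ δ * ∑ i, v i ^ 2 := mul_nonneg hδ.le hv2
  linarith
end

section
/- Let Γ̂ and Γ be symmetric n×n matrices and δ > 0. Suppose vᵀΓv ≥ δ‖v‖₂² for all v ∈ ℝⁿ, and |vᵀ(Γ̂ - Γ)v| ≤ δ/150 for all v with ‖v‖₀ ≤ 2s and ‖v‖₂ ≤ 1. Then vᵀΓ̂v ≥ (δ/2)‖v‖₂² - (δ/(32s))‖v‖₁² for all v ∈ ℝⁿ. -/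
open Matrix Finset

namespace RET

variable {n : ℕ}

noncomputable def fsupp (v : Fin n → ℝ) : Finset (Fin n) := Finset.univ.filter (fun i => v i ≠ 0)

lemma mem_fsupp {v : Fin n → ℝ} {i : Fin n} : i ∈ fsupp v ↔ v i ≠ 0 := by
  simp [fsupp]

lemma eq_zero_of_fsupp_empty {v : Fin n → ℝ} (h : (fsupp v).card = 0) : v = 0 := by
  funext i
  by_contra hvi
  have : i ∈ fsupp v := mem_fsupp.2 hvi
  simp [Finset.card_eq_zero.1 h] at this

lemma fsupp_add_subset (a b : Fin n → ℝ) : fsupp (a + b) ⊆ fsupp a ∪ fsupp b := by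
  intro i hi
  rw [mem_fsupp] at hi
  rw [Finset.mem_union, mem_fsupp, mem_fsupp]
  by_contra h
  push_neg at h
  simp [Pi.add_apply, h.1, h.2] at hi

lemma fsupp_smul_subset (c : ℝ) (a : Fin n → ℝ) : fsupp (c • a) ⊆ fsupp a := by
  intro i hi
  rw [mem_fsupp] at hi ⊢
  intro h
  simp [h] at hi

lemma fsupp_neg (a : Fin n → ℝ) : fsupp (-a) = fsupp a := by
  ext i; simp [mem_fsupp]

/-- existence of a "top-k" subset of the support -/
lemma exists_top (v : Fin n → ℝ) (k : ℕ) (hk : k ≤ (fsupp v).card) :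
    ∃ A, A ⊆ fsupp v ∧ A.card = k ∧
      ∀ i ∈ A, ∀ j ∈ fsupp v, j ∉ A → |v j| ≤ |v i| := by
  classical
  obtain ⟨A₀, hA₀, hcard₀⟩ := Finset.exists_subset_card_eq hk
  set S := (fsupp v).powerset.filter (fun A => A.card = k) with hS
  have hne : S.Nonempty := ⟨A₀, by simp [hS, Finset.mem_powerset, hA₀, hcard₀]⟩
  obtain ⟨A, hAS, hmax⟩ := S.exists_max_image (fun A => ∑ i ∈ A, |v i|) hne
  rw [hS, Finset.mem_filter, Finset.mem_powerset] at hAS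
  refine ⟨A, hAS.1, hAS.2, ?_⟩
  intro i hi j hj hjA
  by_contra hlt
  push_neg at hlt
  set A' := insert j (A.erase i) with hA'
  have hij : i ≠ j := fun h => hjA (h ▸ hi)
  have hjni : j ∉ A.erase i := fun h => hjA (Finset.mem_of_mem_erase h)
  have hkpos : 1 ≤ k := by
    rcases Nat.eq_zero_or_pos k with h | h
    · exfalso; rw [← hAS.2, Finset.card_eq_zero] at h; simp [h] at hi
    · exact h
  have hcard' : A'.card = k := by
    rw [hA', Finset.card_insert_of_notMem hjni, Finset.card_erase_of_mem hi, hAS.2]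
    omega
  have hsub' : A' ⊆ fsupp v := by
    intro x hx
    rw [hA', Finset.mem_insert] at hx
    rcases hx with rfl | hx
    · exact hj
    · exact hAS.1 (Finset.mem_of_mem_erase hx)
  have hA'S : A' ∈ S := by
    rw [hS, Finset.mem_filter, Finset.mem_powerset]; exact ⟨hsub', hcard'⟩
  have hsum : ∑ x ∈ A, |v x| < ∑ x ∈ A', |v x| := by
    rw [hA', Finset.sum_insert hjni]
    have := Finset.sum_erase_add A (fun x => |v x|) hi
    have h2 : ∑ x ∈ A.erase i, |v x| = ∑ x ∈ A, |v x| - |v i| := by linarith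
    rw [h2]; linarith
  have := hmax A' hA'S
  linarith


variable {s : ℕ} {ε : ℝ} {M : Matrix (Fin n) (Fin n) ℝ}

lemma sparse_quad (hε : 0 ≤ ε)
    (h : ∀ x : Fin n → ℝ, (fsupp x).card ≤ 2 * s → Real.sqrt (∑ i, x i ^ 2) ≤ 1 →
      |x ⬝ᵥ M.mulVec x| ≤ ε)
    (x : Fin n → ℝ) (hx : (fsupp x).card ≤ 2 * s) :
    |x ⬝ᵥ M.mulVec x| ≤ ε * ∑ i, x i ^ 2 := by
  rcases eq_or_ne x 0 with rfl | hx0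
  · simp
  · have hsum : 0 < ∑ i, x i ^ 2 := by
      have : ∃ i, x i ≠ 0 := by
        by_contra h0; push_neg at h0; exact hx0 (funext h0)
      obtain ⟨i, hi⟩ := this
      have : 0 < x i ^ 2 := by positivity
      exact Finset.sum_pos' (fun j _ => sq_nonneg _) ⟨i, Finset.mem_univ i, this⟩
    set c := Real.sqrt (∑ i, x i ^ 2) with hc
    have hcpos : 0 < c := Real.sqrt_pos.2 hsum
    have hc2 : c ^ 2 = ∑ i, x i ^ 2 := Real.sq_sqrt (le_of_lt hsum)
    have hkey := h (c⁻¹ • x) ?_ ?_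
    · have hval : (c⁻¹ • x) ⬝ᵥ M.mulVec (c⁻¹ • x) = c⁻¹ * (c⁻¹ * (x ⬝ᵥ M.mulVec x)) := by
        rw [Matrix.mulVec_smul, smul_dotProduct, dotProduct_smul]
        simp [smul_eq_mul]
      rw [hval] at hkey
      rw [abs_mul, abs_mul, abs_of_pos (inv_pos.2 hcpos)] at hkey
      calc |x ⬝ᵥ M.mulVec x| = c ^ 2 * (c⁻¹ * (c⁻¹ * |x ⬝ᵥ M.mulVec x|)) := by
            field_simp
        _ ≤ c ^ 2 * ε := by
            apply mul_le_mul_of_nonneg_left hkey (by positivity)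
        _ = ε * ∑ i, x i ^ 2 := by rw [hc2]; ring
    · exact le_trans (Finset.card_le_card (fsupp_smul_subset _ _)) hx
    · have : ∑ i, (c⁻¹ • x) i ^ 2 = c⁻¹ ^ 2 * ∑ i, x i ^ 2 := by
        rw [Finset.mul_sum]; congr 1; funext i; simp [mul_pow]
      rw [this, ← hc2]
      have h1 : c⁻¹ ^ 2 * c ^ 2 = 1 := by field_simp
      rw [h1, Real.sqrt_one]

lemma sparse_bilin (hε : 0 ≤ ε)
    (hsym : ∀ u w : Fin n → ℝ, u ⬝ᵥ M.mulVec w = w ⬝ᵥ M.mulVec u)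
    (hq : ∀ x : Fin n → ℝ, (fsupp x).card ≤ 2 * s → |x ⬝ᵥ M.mulVec x| ≤ ε * ∑ i, x i ^ 2)
    (a b : Fin n → ℝ) (ha : (fsupp a).card ≤ s) (hb : (fsupp b).card ≤ s)
    (hdisj : ∀ i, a i = 0 ∨ b i = 0) :
    |a ⬝ᵥ M.mulVec b| ≤ ε * Real.sqrt (∑ i, a i ^ 2) * Real.sqrt (∑ i, b i ^ 2) := by
  have hzero : ∀ u : Fin n → ℝ, (∑ i, u i ^ 2) = 0 → u = 0 := by
    intro u hu
    funext i
    have := (Finset.sum_eq_zero_iff_of_nonneg (fun j _ => sq_nonneg (u j))).1 hu i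
      (Finset.mem_univ i)
    exact pow_eq_zero_iff (n := 2) (by norm_num) |>.1 this
  rcases eq_or_lt_of_le (Finset.sum_nonneg (fun i (_ : i ∈ Finset.univ) => sq_nonneg (a i))) with hA | hA
  · rw [hzero a hA.symm]; simp
  rcases eq_or_lt_of_le (Finset.sum_nonneg (fun i (_ : i ∈ Finset.univ) => sq_nonneg (b i))) with hB | hB
  · rw [hzero b hB.symm]; simp
  set α := Real.sqrt (∑ i, a i ^ 2) with hα
  set β := Real.sqrt (∑ i, b i ^ 2) with hβ
  have hαpos : 0 < α := Real.sqrt_pos.2 hA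
  have hβpos : 0 < β := Real.sqrt_pos.2 hB
  have hα2 : α ^ 2 = ∑ i, a i ^ 2 := Real.sq_sqrt hA.le
  have hβ2 : β ^ 2 = ∑ i, b i ^ 2 := Real.sq_sqrt hB.le
  set lam := Real.sqrt (β / α) with hlam
  have hlampos : 0 < lam := Real.sqrt_pos.2 (by positivity)
  have hlam2 : lam ^ 2 = β / α := Real.sq_sqrt (by positivity)
  set a' := lam • a with ha'
  set b' := lam⁻¹ • b with hb'
  have hsupa' : (fsupp a').card ≤ s := le_trans (Finset.card_le_card (fsupp_smul_subset _ _)) ha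
  have hsupb' : (fsupp b').card ≤ s := le_trans (Finset.card_le_card (fsupp_smul_subset _ _)) hb
  have hdisj' : ∀ i, a' i = 0 ∨ b' i = 0 := by
    intro i; rcases hdisj i with h | h
    · left; simp [ha', h]
    · right; simp [hb', h]
  have hsa' : ∑ i, a' i ^ 2 = α * β := by
    have : ∑ i, a' i ^ 2 = lam ^ 2 * ∑ i, a i ^ 2 := by
      rw [Finset.mul_sum]; congr 1; funext i; simp [ha', mul_pow]
    rw [this, hlam2, ← hα2]; field_simp
  have hsb' : ∑ i, b' i ^ 2 = α * β := by
    have : ∑ i, b' i ^ 2 = (lam ^ 2)⁻¹ * ∑ i, b i ^ 2 := by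
      rw [Finset.mul_sum]; congr 1; funext i; simp [hb', mul_pow]
    rw [this, hlam2, ← hβ2]; field_simp
  -- cross terms vanish in squares
  have hcross : ∀ i, a' i * b' i = 0 := by
    intro i; rcases hdisj' i with h | h <;> simp [h]
  have hsum_add : ∑ i, (a' i + b' i) ^ 2 = 2 * (α * β) := by
    have : ∀ i : Fin n, (a' i + b' i) ^ 2 = a' i ^ 2 + b' i ^ 2 := by
      intro i; have := hcross i; nlinarith [hcross i]
    rw [Finset.sum_congr rfl (fun i _ => this i), Finset.sum_add_distrib, hsa', hsb']; ring
  have hsum_sub : ∑ i, (a' i - b' i) ^ 2 = 2 * (α * β) := by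
    have : ∀ i : Fin n, (a' i - b' i) ^ 2 = a' i ^ 2 + b' i ^ 2 := by
      intro i; nlinarith [hcross i]
    rw [Finset.sum_congr rfl (fun i _ => this i), Finset.sum_add_distrib, hsa', hsb']; ring
  have hsupadd : (fsupp (a' + b')).card ≤ 2 * s := by
    calc (fsupp (a' + b')).card ≤ (fsupp a' ∪ fsupp b').card :=
          Finset.card_le_card (fsupp_add_subset _ _)
      _ ≤ (fsupp a').card + (fsupp b').card := Finset.card_union_le _ _
      _ ≤ 2 * s := by omega
  have hsupsub : (fsupp (a' - b')).card ≤ 2 * s := by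
    have : a' - b' = a' + (-b') := by ring
    rw [this]
    calc (fsupp (a' + -b')).card ≤ (fsupp a' ∪ fsupp (-b')).card :=
          Finset.card_le_card (fsupp_add_subset _ _)
      _ ≤ (fsupp a').card + (fsupp (-b')).card := Finset.card_union_le _ _
      _ ≤ 2 * s := by rw [fsupp_neg]; omega
  have h1 := hq (a' + b') hsupadd
  have h2 := hq (a' - b') hsupsub
  simp only [Pi.add_apply] at h1
  simp only [Pi.sub_apply] at h2
  rw [hsum_add] at h1
  rw [hsum_sub] at h2
  -- expand quadratic forms
  have hexp1 : (a' + b') ⬝ᵥ M.mulVec (a' + b') =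
      a' ⬝ᵥ M.mulVec a' + 2 * (a' ⬝ᵥ M.mulVec b') + b' ⬝ᵥ M.mulVec b' := by
    rw [Matrix.mulVec_add, dotProduct_add, add_dotProduct, add_dotProduct,
      hsym b' a']
    ring
  have hexp2 : (a' - b') ⬝ᵥ M.mulVec (a' - b') =
      a' ⬝ᵥ M.mulVec a' - 2 * (a' ⬝ᵥ M.mulVec b') + b' ⬝ᵥ M.mulVec b' := by
    rw [Matrix.mulVec_sub, dotProduct_sub, sub_dotProduct, sub_dotProduct,
      hsym b' a']
    ring
  have hval : a' ⬝ᵥ M.mulVec b' = a ⬝ᵥ M.mulVec b := by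
    rw [ha', hb', Matrix.mulVec_smul, smul_dotProduct, dotProduct_smul]
    simp [smul_eq_mul]
    field_simp
  have habs : |4 * (a ⬝ᵥ M.mulVec b)| ≤ 4 * (ε * (α * β)) := by
    have : 4 * (a ⬝ᵥ M.mulVec b) =
        (a' + b') ⬝ᵥ M.mulVec (a' + b') - (a' - b') ⬝ᵥ M.mulVec (a' - b') := by
      rw [hexp1, hexp2, hval]; ring
    rw [this]
    calc |(a' + b') ⬝ᵥ M.mulVec (a' + b') - (a' - b') ⬝ᵥ M.mulVec (a' - b')|
        ≤ |(a' + b') ⬝ᵥ M.mulVec (a' + b')| + |(a' - b') ⬝ᵥ M.mulVec (a' - b')| :=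
          abs_sub _ _
      _ ≤ ε * (2 * (α * β)) + ε * (2 * (α * β)) := add_le_add h1 h2
      _ = 4 * (ε * (α * β)) := by ring
  rw [abs_mul, abs_of_pos (by norm_num : (0:ℝ) < 4)] at habs
  linarith [abs_nonneg (a ⬝ᵥ M.mulVec b)]

/-! restriction helpers -/

lemma restr_decomp (A : Finset (Fin n)) (b : Fin n → ℝ) :
    b = (fun i => if i ∈ A then b i else 0) + (fun i => if i ∈ A then 0 else b i) := by
  funext i; by_cases h : i ∈ A <;> simp [h]

lemma fsupp_restr_subset (A : Finset (Fin n)) (b : Fin n → ℝ) :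
    fsupp (fun i => if i ∈ A then b i else 0) ⊆ A := by
  intro i hi; rw [mem_fsupp] at hi
  by_contra h; simp [h] at hi

lemma fsupp_corestr_subset (A : Finset (Fin n)) (b : Fin n → ℝ) :
    fsupp (fun i => if i ∈ A then 0 else b i) ⊆ fsupp b \ A := by
  intro i hi; rw [mem_fsupp] at hi
  by_cases h : i ∈ A
  · simp [h] at hi
  · simp [h] at hi
    rw [Finset.mem_sdiff, mem_fsupp]; exact ⟨hi, h⟩

lemma l1_split (A : Finset (Fin n)) (b : Fin n → ℝ) :
    ∑ i, |b i| = (∑ i, |if i ∈ A then b i else 0|) + ∑ i, |if i ∈ A then 0 else b i| := by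
  rw [← Finset.sum_add_distrib]
  congr 1; funext i; by_cases h : i ∈ A <;> simp [h]

lemma sq_restr (A : Finset (Fin n)) (b : Fin n → ℝ) :
    ∑ i, (if i ∈ A then b i else 0) ^ 2 = ∑ i ∈ A, b i ^ 2 := by
  rw [show (fun i => (if i ∈ A then b i else 0) ^ 2) = fun i => if i ∈ A then b i ^ 2 else 0
      from funext fun i => by by_cases h : i ∈ A <;> simp [h]]
  rw [Finset.sum_ite_mem, Finset.univ_inter]

lemma sum_sq_eq_support (b : Fin n → ℝ) :
    ∑ i, b i ^ 2 = ∑ i ∈ fsupp b, b i ^ 2 := by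
  symm
  apply Finset.sum_subset (Finset.subset_univ _)
  intro i _ hi
  rw [mem_fsupp, not_not] at hi
  simp [hi]

lemma abs_restr (A : Finset (Fin n)) (b : Fin n → ℝ) :
    (∑ i, |if i ∈ A then b i else 0|) = ∑ i ∈ A, |b i| := by
  rw [show (fun i => |if i ∈ A then b i else 0|) = fun i => if i ∈ A then |b i| else 0
      from funext fun i => by by_cases h : i ∈ A <;> simp [h]]
  rw [Finset.sum_ite_mem, Finset.univ_inter]

lemma sq_le_card_mul {t : ℝ} (ht : 0 ≤ t) (b : Fin n → ℝ) (A : Finset (Fin n))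
    (hbt : ∀ i ∈ A, |b i| ≤ t) :
    ∑ i ∈ A, b i ^ 2 ≤ A.card * t ^ 2 := by
  calc ∑ i ∈ A, b i ^ 2 ≤ ∑ i ∈ A, t ^ 2 := by
        apply Finset.sum_le_sum; intro i hi
        have := hbt i hi; nlinarith [abs_nonneg (b i), sq_abs (b i)]
    _ = A.card * t ^ 2 := by rw [Finset.sum_const, nsmul_eq_mul]

lemma bilin_ext (hε : 0 ≤ ε) (hs : 1 ≤ s)
    (hsym : ∀ u w : Fin n → ℝ, u ⬝ᵥ M.mulVec w = w ⬝ᵥ M.mulVec u)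
    (hq : ∀ x : Fin n → ℝ, (fsupp x).card ≤ 2 * s → |x ⬝ᵥ M.mulVec x| ≤ ε * ∑ i, x i ^ 2) :
    ∀ (k : ℕ) (b : Fin n → ℝ), (fsupp b).card ≤ k →
      ∀ t : ℝ, 0 ≤ t → (∀ i, |b i| ≤ t) →
      ∀ a : Fin n → ℝ, (fsupp a).card ≤ s → (∀ i, a i = 0 ∨ b i = 0) →
      |a ⬝ᵥ M.mulVec b| ≤ ε * Real.sqrt (∑ i, a i ^ 2) *
        (Real.sqrt s * t + (∑ i, |b i|) / Real.sqrt s) := by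
  have hspos : (0:ℝ) < Real.sqrt s := Real.sqrt_pos.2 (by exact_mod_cast Nat.lt_of_lt_of_le Nat.zero_lt_one hs)
  have hss : Real.sqrt s * Real.sqrt s = (s:ℝ) := Real.mul_self_sqrt (by positivity)
  intro k
  induction k with
  | zero =>
    intro b hb t ht hbt a ha hd
    have hb0 : b = 0 := eq_zero_of_fsupp_empty (Nat.le_zero.1 hb)
    rw [hb0]
    simp only [Matrix.mulVec_zero, dotProduct_zero, abs_zero, Pi.zero_apply, abs_zero,
      Finset.sum_const_zero, zero_div, add_zero]
    positivity
  | succ k ih =>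
    intro b hb t ht hbt a ha hd
    set c := (fsupp b).card with hc
    by_cases hc0 : c = 0
    · have hb0 : b = 0 := eq_zero_of_fsupp_empty hc0
      rw [hb0]
      simp only [Matrix.mulVec_zero, dotProduct_zero, abs_zero, Pi.zero_apply,
        Finset.sum_const_zero, zero_div, add_zero]
      positivity
    by_cases hcs : c ≤ s
    · -- b itself is s-sparse
      have hbil := sparse_bilin hε hsym hq a b ha hcs hd
      have hb2 : Real.sqrt (∑ i, b i ^ 2) ≤ Real.sqrt s * t := by
        have h1 : ∑ i, b i ^ 2 ≤ (s:ℝ) * t ^ 2 := by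
          rw [sum_sq_eq_support b]
          calc ∑ i ∈ fsupp b, b i ^ 2 ≤ (fsupp b).card * t ^ 2 :=
                sq_le_card_mul ht b _ (fun i _ => hbt i)
            _ ≤ (s:ℝ) * t ^ 2 := by
                have : ((fsupp b).card : ℝ) ≤ s := by exact_mod_cast hcs
                nlinarith
        calc Real.sqrt (∑ i, b i ^ 2) ≤ Real.sqrt ((s:ℝ) * t ^ 2) := Real.sqrt_le_sqrt h1
          _ = Real.sqrt s * t := by
              rw [Real.sqrt_mul (by positivity), Real.sqrt_sq ht]
      calc |a ⬝ᵥ M.mulVec b| ≤ ε * Real.sqrt (∑ i, a i ^ 2) * Real.sqrt (∑ i, b i ^ 2) := hbil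
        _ ≤ ε * Real.sqrt (∑ i, a i ^ 2) *
            (Real.sqrt s * t + (∑ i, |b i|) / Real.sqrt s) := by
            apply mul_le_mul_of_nonneg_left _ (by positivity)
            have hl1 : 0 ≤ (∑ i, |b i|) / Real.sqrt s := by positivity
            linarith
    · push_neg at hcs
      obtain ⟨A, hAsub, hAcard, htop⟩ := exists_top b s (le_of_lt hcs)
      have hAne : A.Nonempty := Finset.card_pos.1 (by omega)
      set m := A.inf' hAne (fun i => |b i|) with hm
      have hm0 : 0 ≤ m := Finset.le_inf' hAne _ (fun i _ => abs_nonneg _)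
      have hmle : ∀ j, j ∉ A → |b j| ≤ m := by
        intro j hj
        apply Finset.le_inf' hAne
        intro i hi
        by_cases hjs : j ∈ fsupp b
        · exact htop i hi j hjs hj
        · rw [mem_fsupp, not_not] at hjs; simp [hjs, abs_nonneg]
      have hsm : (s : ℝ) * m ≤ ∑ i ∈ A, |b i| := by
        have h1 : ∑ i ∈ A, m ≤ ∑ i ∈ A, |b i| :=
          Finset.sum_le_sum (fun i hi => Finset.inf'_le _ hi)
        rw [Finset.sum_const, hAcard, nsmul_eq_mul] at h1
        exact h1
      set b₁ := (fun i => if i ∈ A then b i else 0) with hb₁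
      set b₂ := (fun i => if i ∈ A then 0 else b i) with hb₂
      have hdecomp : b = b₁ + b₂ := restr_decomp A b
      have hsupb₁ : (fsupp b₁).card ≤ s := by
        calc (fsupp b₁).card ≤ A.card := Finset.card_le_card (fsupp_restr_subset A b)
          _ = s := hAcard
      have hsupb₂ : (fsupp b₂).card ≤ k := by
        calc (fsupp b₂).card ≤ (fsupp b \ A).card :=
              Finset.card_le_card (fsupp_corestr_subset A b)
          _ = c - s := by rw [Finset.card_sdiff_of_subset hAsub, hAcard]
          _ ≤ k := by omega
      have hb₂t : ∀ i, |b₂ i| ≤ m := by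
        intro i; by_cases h : i ∈ A
        · simp [hb₂, h, hm0]
        · simp only [hb₂, if_neg h]; exact hmle i h
      have hd₁ : ∀ i, a i = 0 ∨ b₁ i = 0 := by
        intro i; rcases hd i with h | h
        · left; exact h
        · right; simp [hb₁, h]
      have hd₂ : ∀ i, a i = 0 ∨ b₂ i = 0 := by
        intro i; rcases hd i with h | h
        · left; exact h
        · right; simp [hb₂, h]
      have hIH := ih b₂ hsupb₂ m hm0 hb₂t a ha hd₂
      have hbil := sparse_bilin hε hsym hq a b₁ ha hsupb₁ hd₁
      have hb₁2 : Real.sqrt (∑ i, b₁ i ^ 2) ≤ Real.sqrt s * t := by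
        have h1 : ∑ i, b₁ i ^ 2 ≤ (s:ℝ) * t ^ 2 := by
          rw [hb₁, sq_restr A b]
          calc ∑ i ∈ A, b i ^ 2 ≤ A.card * t ^ 2 := sq_le_card_mul ht b A (fun i _ => hbt i)
            _ = (s:ℝ) * t ^ 2 := by rw [hAcard]
        calc Real.sqrt (∑ i, b₁ i ^ 2) ≤ Real.sqrt ((s:ℝ) * t ^ 2) := Real.sqrt_le_sqrt h1
          _ = Real.sqrt s * t := by rw [Real.sqrt_mul (by positivity), Real.sqrt_sq ht]
      have hl1b₁ : (∑ i, |b₁ i|) = ∑ i ∈ A, |b i| := abs_restr A b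
      have hkey : Real.sqrt s * m ≤ (∑ i, |b₁ i|) / Real.sqrt s := by
        rw [le_div_iff₀ hspos, hl1b₁]
        calc Real.sqrt s * m * Real.sqrt s = (s:ℝ) * m := by
              rw [mul_comm (Real.sqrt s * m), ← mul_assoc, hss]
          _ ≤ ∑ i ∈ A, |b i| := hsm
      have hsplit : a ⬝ᵥ M.mulVec b = a ⬝ᵥ M.mulVec b₁ + a ⬝ᵥ M.mulVec b₂ := by
        conv_lhs => rw [hdecomp]
        rw [Matrix.mulVec_add, dotProduct_add]
      have hl1 : (∑ i, |b i|) = (∑ i, |b₁ i|) + ∑ i, |b₂ i| := l1_split A b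
      set P := Real.sqrt (∑ i, a i ^ 2) with hP
      have hP0 : 0 ≤ P := Real.sqrt_nonneg _
      calc |a ⬝ᵥ M.mulVec b| ≤ |a ⬝ᵥ M.mulVec b₁| + |a ⬝ᵥ M.mulVec b₂| := by
            rw [hsplit]; exact abs_add_le _ _
        _ ≤ ε * P * (Real.sqrt s * t) +
            ε * P * (Real.sqrt s * m + (∑ i, |b₂ i|) / Real.sqrt s) := by
            apply add_le_add _ hIH
            exact le_trans hbil (mul_le_mul_of_nonneg_left hb₁2 (by positivity))
        _ ≤ ε * P * (Real.sqrt s * t + (∑ i, |b i|) / Real.sqrt s) := by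
            have hεP : 0 ≤ ε * P := by positivity
            have h2 : Real.sqrt s * t + (Real.sqrt s * m + (∑ i, |b₂ i|) / Real.sqrt s) ≤
                Real.sqrt s * t + (∑ i, |b i|) / Real.sqrt s := by
              rw [hl1, add_div]
              linarith
            nlinarith [mul_le_mul_of_nonneg_left h2 hεP]

lemma quad_ext (hε : 0 ≤ ε) (hs : 1 ≤ s)
    (hsym : ∀ u w : Fin n → ℝ, u ⬝ᵥ M.mulVec w = w ⬝ᵥ M.mulVec u)
    (hq : ∀ x : Fin n → ℝ, (fsupp x).card ≤ 2 * s → |x ⬝ᵥ M.mulVec x| ≤ ε * ∑ i, x i ^ 2) :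
    ∀ (k : ℕ) (b : Fin n → ℝ), (fsupp b).card ≤ k →
      ∀ t : ℝ, 0 ≤ t → (∀ i, |b i| ≤ t) →
      |b ⬝ᵥ M.mulVec b| ≤ ε * (Real.sqrt s * t + (∑ i, |b i|) / Real.sqrt s) ^ 2 := by
  have hspos : (0:ℝ) < Real.sqrt s :=
    Real.sqrt_pos.2 (by exact_mod_cast Nat.lt_of_lt_of_le Nat.zero_lt_one hs)
  have hss : Real.sqrt s * Real.sqrt s = (s:ℝ) := Real.mul_self_sqrt (by positivity)
  intro k
  induction k with
  | zero =>
    intro b hb t ht hbt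
    have hb0 : b = 0 := eq_zero_of_fsupp_empty (Nat.le_zero.1 hb)
    rw [hb0]
    simp only [Matrix.mulVec_zero, dotProduct_zero, abs_zero]
    positivity
  | succ k ih =>
    intro b hb t ht hbt
    set c := (fsupp b).card with hc
    by_cases hc0 : c = 0
    · have hb0 : b = 0 := eq_zero_of_fsupp_empty hc0
      rw [hb0]
      simp only [Matrix.mulVec_zero, dotProduct_zero, abs_zero]
      positivity
    by_cases hcs : c ≤ s
    · -- b itself is s-sparse
      have hqb := hq b (by omega)
      have h1 : ∑ i, b i ^ 2 ≤ (s:ℝ) * t ^ 2 := by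
        rw [sum_sq_eq_support b]
        calc ∑ i ∈ fsupp b, b i ^ 2 ≤ (fsupp b).card * t ^ 2 :=
              sq_le_card_mul ht b _ (fun i _ => hbt i)
          _ ≤ (s:ℝ) * t ^ 2 := by
              have : ((fsupp b).card : ℝ) ≤ s := by exact_mod_cast hcs
              nlinarith
      have h2 : (s:ℝ) * t ^ 2 = (Real.sqrt s * t) ^ 2 := by
        rw [mul_pow]; rw [show Real.sqrt (s:ℝ) ^ 2 = Real.sqrt s * Real.sqrt s from sq _, hss]
      have h3 : 0 ≤ (∑ i, |b i|) / Real.sqrt s := by positivity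
      calc |b ⬝ᵥ M.mulVec b| ≤ ε * ∑ i, b i ^ 2 := hqb
        _ ≤ ε * (Real.sqrt s * t + (∑ i, |b i|) / Real.sqrt s) ^ 2 := by
            apply mul_le_mul_of_nonneg_left _ hε
            have h4 : 0 ≤ Real.sqrt s * t := by positivity
            nlinarith [h1, h2]
    · push_neg at hcs
      obtain ⟨A, hAsub, hAcard, htop⟩ := exists_top b s (le_of_lt hcs)
      have hAne : A.Nonempty := Finset.card_pos.1 (by omega)
      set m := A.inf' hAne (fun i => |b i|) with hm
      have hm0 : 0 ≤ m := Finset.le_inf' hAne _ (fun i _ => abs_nonneg _)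
      have hmle : ∀ j, j ∉ A → |b j| ≤ m := by
        intro j hj
        apply Finset.le_inf' hAne
        intro i hi
        by_cases hjs : j ∈ fsupp b
        · exact htop i hi j hjs hj
        · rw [mem_fsupp, not_not] at hjs; simp [hjs, abs_nonneg]
      have hsm : (s : ℝ) * m ≤ ∑ i ∈ A, |b i| := by
        have h1 : ∑ i ∈ A, m ≤ ∑ i ∈ A, |b i| :=
          Finset.sum_le_sum (fun i hi => Finset.inf'_le _ hi)
        rw [Finset.sum_const, hAcard, nsmul_eq_mul] at h1
        exact h1
      set b₁ := (fun i => if i ∈ A then b i else 0) with hb₁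
      set b₂ := (fun i => if i ∈ A then 0 else b i) with hb₂
      have hdecomp : b = b₁ + b₂ := restr_decomp A b
      have hsupb₁ : (fsupp b₁).card ≤ s := by
        calc (fsupp b₁).card ≤ A.card := Finset.card_le_card (fsupp_restr_subset A b)
          _ = s := hAcard
      have hsupb₂ : (fsupp b₂).card ≤ k := by
        calc (fsupp b₂).card ≤ (fsupp b \ A).card :=
              Finset.card_le_card (fsupp_corestr_subset A b)
          _ = c - s := by rw [Finset.card_sdiff_of_subset hAsub, hAcard]
          _ ≤ k := by omega
      have hb₂t : ∀ i, |b₂ i| ≤ m := by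
        intro i; by_cases h : i ∈ A
        · simp [hb₂, h, hm0]
        · simp only [hb₂, if_neg h]; exact hmle i h
      have hd₁₂ : ∀ i, b₁ i = 0 ∨ b₂ i = 0 := by
        intro i; by_cases h : i ∈ A
        · right; simp [hb₂, h]
        · left; simp [hb₁, h]
      set X := Real.sqrt s * t with hX
      set Y := Real.sqrt s * m + (∑ i, |b₂ i|) / Real.sqrt s with hY
      have hX0 : 0 ≤ X := by positivity
      have hY0 : 0 ≤ Y := by positivity
      -- bound on Σ b₁²
      have hsq₁ : ∑ i, b₁ i ^ 2 ≤ X ^ 2 := by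
        rw [hb₁, sq_restr A b]
        calc ∑ i ∈ A, b i ^ 2 ≤ A.card * t ^ 2 := sq_le_card_mul ht b A (fun i _ => hbt i)
          _ = (s:ℝ) * t ^ 2 := by rw [hAcard]
          _ = X ^ 2 := by
              rw [hX, mul_pow, show Real.sqrt (s:ℝ) ^ 2 = Real.sqrt s * Real.sqrt s from sq _,
                hss]
      have hb₁2 : Real.sqrt (∑ i, b₁ i ^ 2) ≤ X := by
        calc Real.sqrt (∑ i, b₁ i ^ 2) ≤ Real.sqrt (X ^ 2) := Real.sqrt_le_sqrt hsq₁
          _ = X := Real.sqrt_sq hX0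
      have h11 : |b₁ ⬝ᵥ M.mulVec b₁| ≤ ε * X ^ 2 := by
        calc |b₁ ⬝ᵥ M.mulVec b₁| ≤ ε * ∑ i, b₁ i ^ 2 := hq b₁ (by omega)
          _ ≤ ε * X ^ 2 := mul_le_mul_of_nonneg_left hsq₁ hε
      have h12 : |b₁ ⬝ᵥ M.mulVec b₂| ≤ ε * X * Y := by
        have := bilin_ext hε hs hsym hq k b₂ hsupb₂ m hm0 hb₂t b₁ hsupb₁ hd₁₂
        calc |b₁ ⬝ᵥ M.mulVec b₂| ≤ ε * Real.sqrt (∑ i, b₁ i ^ 2) * Y := this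
          _ ≤ ε * X * Y := by
              apply mul_le_mul_of_nonneg_right _ hY0
              exact mul_le_mul_of_nonneg_left hb₁2 hε
      have h22 : |b₂ ⬝ᵥ M.mulVec b₂| ≤ ε * Y ^ 2 := ih b₂ hsupb₂ m hm0 hb₂t
      have hexp : b ⬝ᵥ M.mulVec b =
          b₁ ⬝ᵥ M.mulVec b₁ + 2 * (b₁ ⬝ᵥ M.mulVec b₂) + b₂ ⬝ᵥ M.mulVec b₂ := by
        conv_lhs => rw [hdecomp]
        rw [Matrix.mulVec_add, dotProduct_add, add_dotProduct,
          add_dotProduct, hsym b₂ b₁]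
        ring
      have hl1b₁ : (∑ i, |b₁ i|) = ∑ i ∈ A, |b i| := abs_restr A b
      have hkey : Real.sqrt s * m ≤ (∑ i, |b₁ i|) / Real.sqrt s := by
        rw [le_div_iff₀ hspos, hl1b₁]
        calc Real.sqrt s * m * Real.sqrt s = (s:ℝ) * m := by
              rw [mul_comm (Real.sqrt s * m), ← mul_assoc, hss]
          _ ≤ ∑ i ∈ A, |b i| := hsm
      have hl1 : (∑ i, |b i|) = (∑ i, |b₁ i|) + ∑ i, |b₂ i| := l1_split A b
      have hXY : X + Y ≤ Real.sqrt s * t + (∑ i, |b i|) / Real.sqrt s := by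
        rw [hl1, add_div, hX, hY]
        linarith
      calc |b ⬝ᵥ M.mulVec b| ≤
            |b₁ ⬝ᵥ M.mulVec b₁| + 2 * |b₁ ⬝ᵥ M.mulVec b₂| + |b₂ ⬝ᵥ M.mulVec b₂| := by
            rw [hexp]
            calc |b₁ ⬝ᵥ M.mulVec b₁ + 2 * (b₁ ⬝ᵥ M.mulVec b₂) + b₂ ⬝ᵥ M.mulVec b₂| ≤
                  |b₁ ⬝ᵥ M.mulVec b₁ + 2 * (b₁ ⬝ᵥ M.mulVec b₂)| + |b₂ ⬝ᵥ M.mulVec b₂| :=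
                  abs_add_le _ _
              _ ≤ |b₁ ⬝ᵥ M.mulVec b₁| + |2 * (b₁ ⬝ᵥ M.mulVec b₂)| + |b₂ ⬝ᵥ M.mulVec b₂| := by
                  have := abs_add_le (b₁ ⬝ᵥ M.mulVec b₁) (2 * (b₁ ⬝ᵥ M.mulVec b₂))
                  linarith
              _ = |b₁ ⬝ᵥ M.mulVec b₁| + 2 * |b₁ ⬝ᵥ M.mulVec b₂| + |b₂ ⬝ᵥ M.mulVec b₂| := by
                  rw [abs_mul, abs_of_pos (by norm_num : (0:ℝ) < 2)]
        _ ≤ ε * X ^ 2 + 2 * (ε * X * Y) + ε * Y ^ 2 := by linarith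
        _ = ε * (X + Y) ^ 2 := by ring
        _ ≤ ε * (Real.sqrt s * t + (∑ i, |b i|) / Real.sqrt s) ^ 2 := by
            apply mul_le_mul_of_nonneg_left _ hε
            exact pow_le_pow_left₀ (by linarith) hXY 2

lemma quad_all (hε : 0 ≤ ε) (hs : 1 ≤ s)
    (hsym : ∀ u w : Fin n → ℝ, u ⬝ᵥ M.mulVec w = w ⬝ᵥ M.mulVec u)
    (hq : ∀ x : Fin n → ℝ, (fsupp x).card ≤ 2 * s → |x ⬝ᵥ M.mulVec x| ≤ ε * ∑ i, x i ^ 2)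
    (v : Fin n → ℝ) :
    |v ⬝ᵥ M.mulVec v| ≤
      ε * (Real.sqrt (∑ i, v i ^ 2) + (∑ i, |v i|) / Real.sqrt s) ^ 2 := by
  have hspos : (0:ℝ) < Real.sqrt s :=
    Real.sqrt_pos.2 (by exact_mod_cast Nat.lt_of_lt_of_le Nat.zero_lt_one hs)
  have hss : Real.sqrt s * Real.sqrt s = (s:ℝ) := Real.mul_self_sqrt (by positivity)
  set c := (fsupp v).card with hc
  have hv2 : (Real.sqrt (∑ i, v i ^ 2)) ^ 2 = ∑ i, v i ^ 2 :=
    Real.sq_sqrt (Finset.sum_nonneg fun i _ => sq_nonneg _)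
  by_cases hcs : c ≤ s
  · calc |v ⬝ᵥ M.mulVec v| ≤ ε * ∑ i, v i ^ 2 := hq v (by omega)
      _ ≤ ε * (Real.sqrt (∑ i, v i ^ 2) + (∑ i, |v i|) / Real.sqrt s) ^ 2 := by
          apply mul_le_mul_of_nonneg_left _ hε
          have h1 : 0 ≤ Real.sqrt (∑ i, v i ^ 2) := Real.sqrt_nonneg _
          have h2 : 0 ≤ (∑ i, |v i|) / Real.sqrt s := by positivity
          nlinarith [hv2]
  · push_neg at hcs
    obtain ⟨A, hAsub, hAcard, htop⟩ := exists_top v s (le_of_lt hcs)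
    have hAne : A.Nonempty := Finset.card_pos.1 (by omega)
    set m := A.inf' hAne (fun i => |v i|) with hm
    have hm0 : 0 ≤ m := Finset.le_inf' hAne _ (fun i _ => abs_nonneg _)
    have hmle : ∀ j, j ∉ A → |v j| ≤ m := by
      intro j hj
      apply Finset.le_inf' hAne
      intro i hi
      by_cases hjs : j ∈ fsupp v
      · exact htop i hi j hjs hj
      · rw [mem_fsupp, not_not] at hjs; simp [hjs, abs_nonneg]
    have hsm : (s : ℝ) * m ≤ ∑ i ∈ A, |v i| := by
      have h1 : ∑ i ∈ A, m ≤ ∑ i ∈ A, |v i| :=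
        Finset.sum_le_sum (fun i hi => Finset.inf'_le _ hi)
      rw [Finset.sum_const, hAcard, nsmul_eq_mul] at h1
      exact h1
    set a := (fun i => if i ∈ A then v i else 0) with ha
    set b := (fun i => if i ∈ A then 0 else v i) with hb
    have hdecomp : v = a + b := restr_decomp A v
    have hsupa : (fsupp a).card ≤ s := by
      calc (fsupp a).card ≤ A.card := Finset.card_le_card (fsupp_restr_subset A v)
        _ = s := hAcard
    have hbt : ∀ i, |b i| ≤ m := by
      intro i; by_cases h : i ∈ A
      · simp [hb, h, hm0]
      · simp only [hb, if_neg h]; exact hmle i h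
    have hdab : ∀ i, a i = 0 ∨ b i = 0 := by
      intro i; by_cases h : i ∈ A
      · right; simp [hb, h]
      · left; simp [ha, h]
    set X := Real.sqrt (∑ i, a i ^ 2) with hX
    set Y := Real.sqrt s * m + (∑ i, |b i|) / Real.sqrt s with hY
    have hX0 : 0 ≤ X := Real.sqrt_nonneg _
    have hY0 : 0 ≤ Y := by positivity
    have hXv : X ≤ Real.sqrt (∑ i, v i ^ 2) := by
      apply Real.sqrt_le_sqrt
      rw [ha, sq_restr A v]
      exact Finset.sum_le_sum_of_subset_of_nonneg (Finset.subset_univ A)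
        (fun i _ _ => sq_nonneg _)
    have hX2 : X ^ 2 = ∑ i, a i ^ 2 :=
      Real.sq_sqrt (Finset.sum_nonneg fun i _ => sq_nonneg _)
    have h11 : |a ⬝ᵥ M.mulVec a| ≤ ε * X ^ 2 := by
      calc |a ⬝ᵥ M.mulVec a| ≤ ε * ∑ i, a i ^ 2 := hq a (by omega)
        _ = ε * X ^ 2 := by rw [hX2]
    have h12 : |a ⬝ᵥ M.mulVec b| ≤ ε * X * Y :=
      bilin_ext hε hs hsym hq (fsupp b).card b le_rfl m hm0 hbt a hsupa hdab
    have h22 : |b ⬝ᵥ M.mulVec b| ≤ ε * Y ^ 2 :=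
      quad_ext hε hs hsym hq (fsupp b).card b le_rfl m hm0 hbt
    have hexp : v ⬝ᵥ M.mulVec v =
        a ⬝ᵥ M.mulVec a + 2 * (a ⬝ᵥ M.mulVec b) + b ⬝ᵥ M.mulVec b := by
      conv_lhs => rw [hdecomp]
      rw [Matrix.mulVec_add, dotProduct_add, add_dotProduct,
        add_dotProduct, hsym b a]
      ring
    have hl1a : (∑ i, |a i|) = ∑ i ∈ A, |v i| := abs_restr A v
    have hkey : Real.sqrt s * m ≤ (∑ i, |a i|) / Real.sqrt s := by
      rw [le_div_iff₀ hspos, hl1a]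
      calc Real.sqrt s * m * Real.sqrt s = (s:ℝ) * m := by
            rw [mul_comm (Real.sqrt s * m), ← mul_assoc, hss]
        _ ≤ ∑ i ∈ A, |v i| := hsm
    have hl1 : (∑ i, |v i|) = (∑ i, |a i|) + ∑ i, |b i| := l1_split A v
    have hXY : X + Y ≤ Real.sqrt (∑ i, v i ^ 2) + (∑ i, |v i|) / Real.sqrt s := by
      rw [hl1, add_div, hY]
      linarith
    calc |v ⬝ᵥ M.mulVec v| ≤
          |a ⬝ᵥ M.mulVec a| + 2 * |a ⬝ᵥ M.mulVec b| + |b ⬝ᵥ M.mulVec b| := by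
          rw [hexp]
          calc |a ⬝ᵥ M.mulVec a + 2 * (a ⬝ᵥ M.mulVec b) + b ⬝ᵥ M.mulVec b| ≤
                |a ⬝ᵥ M.mulVec a + 2 * (a ⬝ᵥ M.mulVec b)| + |b ⬝ᵥ M.mulVec b| := abs_add_le _ _
            _ ≤ |a ⬝ᵥ M.mulVec a| + |2 * (a ⬝ᵥ M.mulVec b)| + |b ⬝ᵥ M.mulVec b| := by
                have := abs_add_le (a ⬝ᵥ M.mulVec a) (2 * (a ⬝ᵥ M.mulVec b))
                linarith
            _ = |a ⬝ᵥ M.mulVec a| + 2 * |a ⬝ᵥ M.mulVec b| + |b ⬝ᵥ M.mulVec b| := by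
                rw [abs_mul, abs_of_pos (by norm_num : (0:ℝ) < 2)]
      _ ≤ ε * X ^ 2 + 2 * (ε * X * Y) + ε * Y ^ 2 := by linarith
      _ = ε * (X + Y) ^ 2 := by ring
      _ ≤ ε * (Real.sqrt (∑ i, v i ^ 2) + (∑ i, |v i|) / Real.sqrt s) ^ 2 := by
          apply mul_le_mul_of_nonneg_left _ hε
          exact pow_le_pow_left₀ (by linarith) hXY 2

end RET

open RET in
/-- Restricted eigenvalue transfer, global version: if `vᵀΓv ≥ δ‖v‖₂²` for all `v ∈ ℝⁿ`,
and `|vᵀ(Γ̂ - Γ)v| ≤ δ/150` for all `2s`-sparse `v` in the ℓ₂-unit ball, then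
`vᵀΓ̂v ≥ (δ/2)‖v‖₂² - (δ/(32s))‖v‖₁²` for all `v ∈ ℝⁿ`. -/
theorem restricted_eigenvalue_transfer_global (n s : ℕ) (hs : 1 ≤ s) (δ : ℝ) (hδ : 0 < δ)
    (Γhat Γ : Matrix (Fin n) (Fin n) ℝ) (hΓhat : Γhat.IsSymm) (hΓ : Γ.IsSymm)
    (hlow : ∀ v : Fin n → ℝ, δ * ∑ i, v i ^ 2 ≤ v ⬝ᵥ Γ.mulVec v)
    (hdev : ∀ v : Fin n → ℝ, Set.ncard {i | v i ≠ 0} ≤ 2 * s →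
      Real.sqrt (∑ i, v i ^ 2) ≤ 1 → |v ⬝ᵥ (Γhat - Γ).mulVec v| ≤ δ / 150) :
    ∀ v : Fin n → ℝ,
      δ / 2 * (∑ i, v i ^ 2) - δ / (32 * s) * (∑ i, |v i|) ^ 2 ≤ v ⬝ᵥ Γhat.mulVec v := by
  intro v
  set M := Γhat - Γ with hM
  set ε := δ / 150 with hε'
  have hε : 0 ≤ ε := by positivity
  have hMsymm : M.IsSymm := by
    rw [hM, Matrix.IsSymm, Matrix.transpose_sub, hΓhat.eq, hΓ.eq]
  have hsym : ∀ u w : Fin n → ℝ, u ⬝ᵥ M.mulVec w = w ⬝ᵥ M.mulVec u := by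
    intro u w
    rw [Matrix.dotProduct_mulVec, ← Matrix.mulVec_transpose, hMsymm.eq, dotProduct_comm]
  have hdev' : ∀ x : Fin n → ℝ, (fsupp x).card ≤ 2 * s →
      Real.sqrt (∑ i, x i ^ 2) ≤ 1 → |x ⬝ᵥ M.mulVec x| ≤ ε := by
    intro x hx h2
    have hset : {i | x i ≠ 0} = ↑(fsupp x) := by
      ext i; simp [mem_fsupp]
    have : Set.ncard {i | x i ≠ 0} ≤ 2 * s := by
      rw [hset, Set.ncard_coe_finset]; exact hx
    exact hdev x this h2
  have hq : ∀ x : Fin n → ℝ, (fsupp x).card ≤ 2 * s →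
      |x ⬝ᵥ M.mulVec x| ≤ ε * ∑ i, x i ^ 2 := sparse_quad hε hdev'
  have hkey := quad_all hε hs hsym hq v
  have hspos : (0:ℝ) < Real.sqrt s :=
    Real.sqrt_pos.2 (by exact_mod_cast Nat.lt_of_lt_of_le Nat.zero_lt_one hs)
  have hss : Real.sqrt (s:ℝ) ^ 2 = (s:ℝ) := Real.sq_sqrt (by positivity)
  set S2 := ∑ i, v i ^ 2 with hS2
  set L1 := ∑ i, |v i| with hL1
  have hS20 : 0 ≤ S2 := Finset.sum_nonneg fun i _ => sq_nonneg _
  have hL10 : 0 ≤ L1 := Finset.sum_nonneg fun i _ => abs_nonneg _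
  have hv2 : (Real.sqrt S2) ^ 2 = S2 := Real.sq_sqrt hS20
  have hsr : (1:ℝ) ≤ (s:ℝ) := by exact_mod_cast hs
  -- (√S2 + L1/√s)² ≤ 2 S2 + 2 L1²/s
  have hexp : (Real.sqrt S2 + L1 / Real.sqrt s) ^ 2 ≤ 2 * S2 + 2 * (L1 ^ 2 / s) := by
    have h1 : (L1 / Real.sqrt s) ^ 2 = L1 ^ 2 / s := by
      rw [div_pow, hss]
    nlinarith [sq_nonneg (Real.sqrt S2 - L1 / Real.sqrt s), hv2, h1]
  have hbound : |v ⬝ᵥ M.mulVec v| ≤ ε * (2 * S2 + 2 * (L1 ^ 2 / s)) := by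
    calc |v ⬝ᵥ M.mulVec v| ≤ ε * (Real.sqrt S2 + L1 / Real.sqrt s) ^ 2 := hkey
      _ ≤ ε * (2 * S2 + 2 * (L1 ^ 2 / s)) := mul_le_mul_of_nonneg_left hexp hε
  have hdecomp : v ⬝ᵥ Γhat.mulVec v = v ⬝ᵥ Γ.mulVec v + v ⬝ᵥ M.mulVec v := by
    rw [hM, Matrix.sub_mulVec, dotProduct_sub]
    ring
  have hlowv := hlow v
  have hMv : -(ε * (2 * S2 + 2 * (L1 ^ 2 / s))) ≤ v ⬝ᵥ M.mulVec v := by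
    have := abs_le.1 (le_refl |v ⬝ᵥ M.mulVec v|) |>.1
    linarith [neg_abs_le (v ⬝ᵥ M.mulVec v), hbound]
  rw [hdecomp]
  have hsne : (s:ℝ) ≠ 0 := by linarith
  have hu : δ / (32 * (s:ℝ)) * L1 ^ 2 = δ / 32 * (L1 ^ 2 / s) := by
    field_simp
  have hu0 : 0 ≤ L1 ^ 2 / (s:ℝ) := by positivity
  have hfin : δ / 2 * S2 - δ / (32 * (s:ℝ)) * L1 ^ 2 ≤
      δ * S2 - ε * (2 * S2 + 2 * (L1 ^ 2 / s)) := by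
    rw [hu, hε']
    nlinarith [mul_nonneg hδ.le hS20, mul_nonneg hδ.le hu0]
  linarith
end

section
/- For Lasso-type estimation: let β̂ minimize (1/(2N))‖y - Xβ‖₂² + λ‖Dβ‖₁ over β ∈ ℝⁿ, where y = Xβ* + ε, D ∈ ℝ^{(m+n)×n} has full column rank with Moore–Penrose inverse D⁺ satisfying D⁺D = Iₙ, and S ⊆ [m+n] contains the support of Dβ*. If λ ≥ (2/N)‖εᵀXD⁺‖_∞, then the error Δ = β̂ - β* satisfies ‖(DΔ)_{S^c}‖₁ ≤ 3‖(DΔ)_S‖₁. -/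
open Matrix

/-- Cone lemma for generalized-Lasso estimation: if `β̂` minimizes
`(1/(2N))‖y - Xβ‖₂² + λ‖Dβ‖₁` with `y = Xβ* + ε`, `D⁺D = Iₙ`, the support of `Dβ*` contained
in `S`, and `λ ≥ (2/N)‖εᵀXD⁺‖_∞`, then the error `Δ = β̂ - β*` satisfies
`‖(DΔ)_{S^c}‖₁ ≤ 3‖(DΔ)_S‖₁`. -/
theorem lasso_cone_condition (N n m : ℕ) (hN : 0 < N)
    (X : Matrix (Fin N) (Fin n) ℝ) (ε : Fin N → ℝ) (βstar : Fin n → ℝ)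
    (D : Matrix (Fin (m + n)) (Fin n) ℝ)
    (Dplus : Matrix (Fin n) (Fin (m + n)) ℝ)
    (hDplus : Dplus * D = 1)
    (S : Finset (Fin (m + n)))
    (hsupp : ∀ i ∉ S, D.mulVec βstar i = 0)
    (lam : ℝ) (hlam0 : 0 < lam)
    (hlam : ∀ j, 2 / (N : ℝ) * |Matrix.vecMul ε (X * Dplus) j| ≤ lam)
    (βhat : Fin n → ℝ)
    (hopt : ∀ β : Fin n → ℝ,
      1 / (2 * (N : ℝ)) * ∑ i, ((X.mulVec βstar + ε) i - X.mulVec βhat i) ^ 2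
          + lam * ∑ i, |D.mulVec βhat i|
        ≤ 1 / (2 * (N : ℝ)) * ∑ i, ((X.mulVec βstar + ε) i - X.mulVec β i) ^ 2
          + lam * ∑ i, |D.mulVec β i|) :
    ∑ i ∈ Sᶜ, |D.mulVec (βhat - βstar) i| ≤ 3 * ∑ i ∈ S, |D.mulVec (βhat - βstar) i| := by
  have hNpos : (0:ℝ) < N := by exact_mod_cast hN
  have hN' : (N:ℝ) ≠ 0 := ne_of_gt hNpos
  set v : Fin N → ℝ := X.mulVec (βhat - βstar) with hv
  set u : Fin (m+n) → ℝ := D.mulVec (βhat - βstar) with hu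
  set w : Fin (m+n) → ℝ := Matrix.vecMul ε (X * Dplus) with hw
  have h1 := hopt βstar
  have e1 : ∀ i, (X.mulVec βstar + ε) i - X.mulVec βhat i = ε i - v i := by
    intro i
    simp [hv, Matrix.mulVec_sub, Pi.add_apply, Pi.sub_apply]
    ring
  have e2 : ∀ i, (X.mulVec βstar + ε) i - X.mulVec βstar i = ε i := by
    intro i; simp
  simp only [e1, e2] at h1
  have hexp : ∑ i, (ε i - v i)^2
      = ∑ i, ε i ^2 - 2 * ∑ i, ε i * v i + ∑ i, v i ^2 := by
    rw [Finset.mul_sum, ← Finset.sum_sub_distrib, ← Finset.sum_add_distrib]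
    exact Finset.sum_congr rfl fun i _ => by ring
  rw [hexp] at h1
  have hQ : (0:ℝ) ≤ ∑ i, v i ^2 := Finset.sum_nonneg fun i _ => sq_nonneg _
  have hc : (0:ℝ) < 1/(2*(N:ℝ)) := by positivity
  have hrel : (1:ℝ)/(N:ℝ) = 2*(1/(2*(N:ℝ))) := by field_simp
  have key : lam * (∑ i, |D.mulVec βhat i|)
      ≤ (1/(N:ℝ)) * (∑ i, ε i * v i) + lam * ∑ i, |D.mulVec βstar i| := by
    rw [hrel]
    have hexp2 : 1/(2*(N:ℝ)) * (∑ i, ε i ^2 - 2 * ∑ i, ε i * v i + ∑ i, v i ^2)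
        = 1/(2*(N:ℝ)) * ∑ i, ε i ^2 - (2*(1/(2*(N:ℝ)))) * ∑ i, ε i * v i
          + 1/(2*(N:ℝ)) * ∑ i, v i ^2 := by ring
    rw [hexp2] at h1
    linarith [mul_nonneg hc.le hQ]
  -- rewrite the cross term
  have hT : ∑ i, ε i * v i = ∑ j, w j * u j := by
    have : ε ⬝ᵥ v = w ⬝ᵥ u := by
      calc ε ⬝ᵥ v = Matrix.vecMul ε X ⬝ᵥ (βhat - βstar) := dotProduct_mulVec _ _ _
        _ = Matrix.vecMul ε X ⬝ᵥ (Dplus.mulVec (D.mulVec (βhat - βstar))) := by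
            rw [Matrix.mulVec_mulVec, hDplus, Matrix.one_mulVec]
        _ = Matrix.vecMul (Matrix.vecMul ε X) Dplus ⬝ᵥ u := dotProduct_mulVec _ _ _
        _ = w ⬝ᵥ u := by rw [hw, ← Matrix.vecMul_vecMul]
    simpa [dotProduct] using this
  have hwj : ∀ j, |w j| ≤ (N:ℝ) * lam / 2 := by
    intro j
    have h := hlam j
    rw [div_mul_eq_mul_div, div_le_iff₀ hNpos] at h
    nlinarith
  have h2 : ∑ j, w j * u j ≤ ∑ j, ((N:ℝ) * lam / 2) * |u j| := by
    calc ∑ j, w j * u j ≤ ∑ j, |w j * u j| :=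
          Finset.sum_le_sum fun j _ => le_abs_self _
      _ = ∑ j, |w j| * |u j| := by simp [abs_mul]
      _ ≤ ∑ j, ((N:ℝ) * lam / 2) * |u j| :=
          Finset.sum_le_sum fun j _ => mul_le_mul_of_nonneg_right (hwj j) (abs_nonneg _)
  have h2' : (1/(N:ℝ)) * (∑ i, ε i * v i) ≤ (lam/2) * ∑ j, |u j| := by
    rw [hT]
    calc (1/(N:ℝ)) * (∑ j, w j * u j) ≤ (1/(N:ℝ)) * ∑ j, ((N:ℝ) * lam / 2) * |u j| := by
          apply mul_le_mul_of_nonneg_left h2 (by positivity)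
      _ = (lam/2) * ∑ j, |u j| := by
          rw [Finset.mul_sum, Finset.mul_sum]
          exact Finset.sum_congr rfl fun j _ => by field_simp
  have key2 : lam * (∑ i, |D.mulVec βhat i|)
      ≤ lam * ((1/2) * ∑ j, |u j| + ∑ i, |D.mulVec βstar i|) := by
    have : lam * ((1/2) * ∑ j, |u j| + ∑ i, |D.mulVec βstar i|)
        = (lam/2) * ∑ j, |u j| + lam * ∑ i, |D.mulVec βstar i| := by ring
    rw [this]
    linarith
  have h3 : (∑ i, |D.mulVec βhat i|)
      ≤ (1/2) * ∑ j, |u j| + ∑ i, |D.mulVec βstar i| :=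
    le_of_mul_le_mul_left key2 hlam0
  -- split sums over S and Sᶜ
  have hsplit : ∀ f : Fin (m+n) → ℝ, ∑ i, f i = ∑ i ∈ S, f i + ∑ i ∈ Sᶜ, f i := by
    intro f; rw [Finset.sum_add_sum_compl]
  rw [hsplit (fun i => |D.mulVec βhat i|), hsplit (fun i => |u i|),
      hsplit (fun i => |D.mulVec βstar i|)] at h3
  have hbc : ∑ i ∈ Sᶜ, |D.mulVec βstar i| = 0 :=
    Finset.sum_eq_zero fun i hi => by rw [hsupp i (Finset.mem_compl.mp hi), abs_zero]
  have hβ : ∀ i, D.mulVec βhat i = D.mulVec βstar i + u i := by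
    intro i; simp [hu, Matrix.mulVec_sub]
  have hSc : ∑ i ∈ Sᶜ, |D.mulVec βhat i| = ∑ i ∈ Sᶜ, |u i| :=
    Finset.sum_congr rfl fun i hi => by
      rw [hβ i, hsupp i (Finset.mem_compl.mp hi), zero_add]
  have hS : ∑ i ∈ S, |D.mulVec βstar i| - ∑ i ∈ S, |u i| ≤ ∑ i ∈ S, |D.mulVec βhat i| := by
    rw [← Finset.sum_sub_distrib]
    refine Finset.sum_le_sum fun i _ => ?_
    have := abs_sub_abs_le_abs_sub (D.mulVec βstar i) (D.mulVec βhat i)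
    have h4 : |D.mulVec βstar i - D.mulVec βhat i| = |u i| := by
      rw [hβ i]; rw [show D.mulVec βstar i - (D.mulVec βstar i + u i) = -(u i) by ring, abs_neg]
    linarith [this, h4.le]
  rw [hSc, hbc] at h3
  linarith
end

section
/- Under the cone condition and restricted eigenvalue condition, the Graph-Piecewise-Polynomial-Lasso satisfies: if λ ≥ (2/N)‖εᵀXD⁺‖_∞ and (1/N)‖XD⁺v‖₂² ≥ η‖v‖₂² holds for all v in the cone C = {v : ‖v_{S^c}‖₁ ≤ 3‖v_S‖₁}, then ‖β̂ - β*‖₂ ≤ (3λ_g√((2d)^{k+1}s₁) + 3λ√s₂)/η, where s₁ = |S₁| and s₂ = |S₂|. -/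
open Matrix Finset

lemma gppl_ite_split (P : Prop) [Decidable P] (a b : ℝ) :
    (if P then a + b else 0) = (if P then a else 0) + (if P then b else 0) := by
  split <;> simp

lemma gppl_lap_quad_nonneg {n : ℕ} (G : SimpleGraph (Fin n)) [DecidableRel G.Adj]
    (x : Fin n → ℝ) : 0 ≤ x ⬝ᵥ (G.lapMatrix ℝ) *ᵥ x := by
  rw [← Matrix.toLinearMap₂'_apply', SimpleGraph.lapMatrix_toLinearMap₂']
  positivity

lemma gppl_lap_quad_le {n : ℕ} (G : SimpleGraph (Fin n)) [DecidableRel G.Adj]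
    (x : Fin n → ℝ) :
    x ⬝ᵥ (G.lapMatrix ℝ) *ᵥ x ≤ 2 * (G.maxDegree : ℝ) * ∑ i, x i ^ 2 := by
  rw [← Matrix.toLinearMap₂'_apply', SimpleGraph.lapMatrix_toLinearMap₂']
  have h1 : (∑ i : Fin n, ∑ j : Fin n, if G.Adj i j then (x i - x j) ^ 2 else 0)
      ≤ ∑ i : Fin n, ∑ j : Fin n,
          if G.Adj i j then 2 * x i ^ 2 + 2 * x j ^ 2 else 0 := by
    refine Finset.sum_le_sum fun i _ => Finset.sum_le_sum fun j _ => ?_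
    split
    · nlinarith [sq_nonneg (x i + x j)]
    · exact le_rfl
  have h2 : (∑ i : Fin n, ∑ j : Fin n,
        if G.Adj i j then 2 * x i ^ 2 + 2 * x j ^ 2 else 0)
      = (∑ i : Fin n, (G.degree i : ℝ) * (2 * x i ^ 2))
        + ∑ j : Fin n, (G.degree j : ℝ) * (2 * x j ^ 2) := by
    simp_rw [gppl_ite_split, Finset.sum_add_distrib]
    congr 1
    · refine Finset.sum_congr rfl fun i _ => ?_
      rw [G.degree_eq_sum_if_adj (R := ℝ) i, Finset.sum_mul]
      refine Finset.sum_congr rfl fun j _ => ?_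
      split <;> simp
    · rw [Finset.sum_comm]
      refine Finset.sum_congr rfl fun j _ => ?_
      rw [G.degree_eq_sum_if_adj (R := ℝ) j, Finset.sum_mul]
      refine Finset.sum_congr rfl fun i _ => ?_
      simp only [G.adj_comm i j]
      split <;> simp
  have h3 : ∀ j : Fin n, (G.degree j : ℝ) * (2 * x j ^ 2)
      ≤ (G.maxDegree : ℝ) * (2 * x j ^ 2) := by
    intro j
    have := G.degree_le_maxDegree j
    have : (G.degree j : ℝ) ≤ (G.maxDegree : ℝ) := by exact_mod_cast this
    nlinarith [sq_nonneg (x j)]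
  have h4 : (∑ i : Fin n, (G.degree i : ℝ) * (2 * x i ^ 2))
      ≤ ∑ i : Fin n, (G.maxDegree : ℝ) * (2 * x i ^ 2) :=
    Finset.sum_le_sum fun i _ => h3 i
  have h5 : (∑ i : Fin n, (G.maxDegree : ℝ) * (2 * x i ^ 2))
      = 2 * (G.maxDegree : ℝ) * ∑ i, x i ^ 2 := by
    calc (∑ i : Fin n, (G.maxDegree : ℝ) * (2 * x i ^ 2))
        = ∑ i : Fin n, (2 * (G.maxDegree : ℝ)) * x i ^ 2 :=
          Finset.sum_congr rfl fun i _ => by ring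
      _ = 2 * (G.maxDegree : ℝ) * ∑ i, x i ^ 2 := (Finset.mul_sum _ _ _).symm
  linarith [h1, h2.le, h2.ge, h4, h5.le]

lemma gppl_psd_cs {n' : Type*} [Fintype n'] (M : Matrix n' n' ℝ) (hsym : Mᵀ = M)
    (hpsd : ∀ z : n' → ℝ, 0 ≤ z ⬝ᵥ M *ᵥ z) (x y : n' → ℝ) :
    (x ⬝ᵥ M *ᵥ y) ^ 2 ≤ (x ⬝ᵥ M *ᵥ x) * (y ⬝ᵥ M *ᵥ y) := by
  have hswap : ∀ a b : n' → ℝ, a ⬝ᵥ M *ᵥ b = b ⬝ᵥ M *ᵥ a := by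
    intro a b
    calc a ⬝ᵥ M *ᵥ b = (a ᵥ* M) ⬝ᵥ b := (Matrix.dotProduct_mulVec _ _ _)
      _ = (M *ᵥ a) ⬝ᵥ b := by conv_lhs => rw [← hsym, Matrix.vecMul_transpose]
      _ = b ⬝ᵥ M *ᵥ a := dotProduct_comm _ _
  have key : ∀ t : ℝ,
      0 ≤ (y ⬝ᵥ M *ᵥ y) * (t * t) + (2 * (x ⬝ᵥ M *ᵥ y)) * t + (x ⬝ᵥ M *ᵥ x) := by
    intro t
    have h0 := hpsd (x + t • y)
    simp only [Matrix.mulVec_add, Matrix.mulVec_smul, dotProduct_add,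
      add_dotProduct, dotProduct_smul, smul_dotProduct,
      smul_eq_mul] at h0
    rw [hswap y x] at h0
    nlinarith [h0]
  have hd := discrim_le_zero key
  rw [discrim] at hd
  nlinarith [hd]

lemma gppl_psd_op {n' : Type*} [Fintype n'] (M : Matrix n' n' ℝ) (hsym : Mᵀ = M)
    (hpsd : ∀ z : n' → ℝ, 0 ≤ z ⬝ᵥ M *ᵥ z) (c : ℝ) (hc : 0 ≤ c)
    (hq : ∀ z : n' → ℝ, z ⬝ᵥ M *ᵥ z ≤ c * ∑ i, z i ^ 2) (x : n' → ℝ) :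
    ∑ i, (M *ᵥ x) i ^ 2 ≤ c ^ 2 * ∑ i, x i ^ 2 := by
  have hq0 : (0:ℝ) ≤ ∑ i, (M *ᵥ x) i ^ 2 := Finset.sum_nonneg fun i _ => sq_nonneg _
  have h1 : (M *ᵥ x) ⬝ᵥ (M *ᵥ x) = ∑ i, (M *ᵥ x) i ^ 2 := by
    simp [dotProduct, sq]
  have h2 := gppl_psd_cs M hsym hpsd (M *ᵥ x) x
  have h3 := hq (M *ᵥ x)
  have h4 := hq x
  have hx0 : (0:ℝ) ≤ ∑ i, x i ^ 2 := Finset.sum_nonneg fun i _ => sq_nonneg _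
  have h5 := hpsd (M *ᵥ x)
  have h6 := hpsd x
  rcases eq_or_lt_of_le hq0 with h | h
  · nlinarith
  · have hcq : (0:ℝ) ≤ c * ∑ i, (M *ᵥ x) i ^ 2 := by positivity
    have hAB : (M *ᵥ x ⬝ᵥ M *ᵥ M *ᵥ x) * (x ⬝ᵥ M *ᵥ x)
        ≤ (c * ∑ i, (M *ᵥ x) i ^ 2) * (c * ∑ i, x i ^ 2) :=
      mul_le_mul h3 h4 h6 hcq
    have hmul : (∑ i, (M *ᵥ x) i ^ 2) * (∑ i, (M *ᵥ x) i ^ 2)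
        ≤ (c ^ 2 * ∑ i, x i ^ 2) * (∑ i, (M *ᵥ x) i ^ 2) := by nlinarith [h2, h1]
    exact le_of_mul_le_mul_right hmul h

lemma gppl_psd_pow {n' : Type*} [Fintype n'] [DecidableEq n'] (M : Matrix n' n' ℝ) (hsym : Mᵀ = M)
    (hpsd : ∀ z : n' → ℝ, 0 ≤ z ⬝ᵥ M *ᵥ z) (c : ℝ) (hc : 0 ≤ c)
    (hq : ∀ z : n' → ℝ, z ⬝ᵥ M *ᵥ z ≤ c * ∑ i, z i ^ 2) (k : ℕ) (x : n' → ℝ) :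
    ∑ i, ((M ^ k) *ᵥ x) i ^ 2 ≤ (c ^ 2) ^ k * ∑ i, x i ^ 2 := by
  induction k generalizing x with
  | zero => simp [Matrix.one_mulVec]
  | succ k ih =>
      have h1 : (M ^ (k+1)) *ᵥ x = (M ^ k) *ᵥ (M *ᵥ x) := by
        rw [Matrix.mulVec_mulVec, ← pow_succ]
      rw [h1]
      calc ∑ i, ((M ^ k) *ᵥ (M *ᵥ x)) i ^ 2
          ≤ (c ^ 2) ^ k * ∑ i, (M *ᵥ x) i ^ 2 := ih (M *ᵥ x)
        _ ≤ (c ^ 2) ^ k * (c ^ 2 * ∑ i, x i ^ 2) := by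
            have := gppl_psd_op M hsym hpsd c hc hq x
            have h2 : (0:ℝ) ≤ (c ^ 2) ^ k := by positivity
            nlinarith
        _ = (c ^ 2) ^ (k+1) * ∑ i, x i ^ 2 := by ring

lemma gppl_quad_pow {n' : Type*} [Fintype n'] [DecidableEq n'] (M : Matrix n' n' ℝ) (hsym : Mᵀ = M)
    (hpsd : ∀ z : n' → ℝ, 0 ≤ z ⬝ᵥ M *ᵥ z) (c : ℝ) (hc : 0 ≤ c)
    (hq : ∀ z : n' → ℝ, z ⬝ᵥ M *ᵥ z ≤ c * ∑ i, z i ^ 2) (k : ℕ) (x : n' → ℝ) :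
    x ⬝ᵥ (M ^ k) *ᵥ x ≤ c ^ k * ∑ i, x i ^ 2 := by
  have hcs := Real.sum_mul_le_sqrt_mul_sqrt Finset.univ x ((M ^ k) *ᵥ x)
  have hx0 : (0:ℝ) ≤ ∑ i, x i ^ 2 := Finset.sum_nonneg fun i _ => sq_nonneg _
  have hpow := gppl_psd_pow M hsym hpsd c hc hq k x
  have h1 : Real.sqrt (∑ i, ((M ^ k) *ᵥ x) i ^ 2)
      ≤ Real.sqrt ((c ^ 2) ^ k * ∑ i, x i ^ 2) := Real.sqrt_le_sqrt hpow
  have h2 : Real.sqrt ((c ^ 2) ^ k * ∑ i, x i ^ 2)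
      = c ^ k * Real.sqrt (∑ i, x i ^ 2) := by
    rw [show ((c ^ 2) ^ k : ℝ) = (c ^ k) ^ 2 by ring, Real.sqrt_mul (sq_nonneg _),
      Real.sqrt_sq (by positivity)]
  have h3 : x ⬝ᵥ (M ^ k) *ᵥ x = ∑ i, x i * ((M ^ k) *ᵥ x) i := rfl
  calc x ⬝ᵥ (M ^ k) *ᵥ x
      ≤ Real.sqrt (∑ i, x i ^ 2) * Real.sqrt (∑ i, ((M ^ k) *ᵥ x) i ^ 2) := by
        rw [h3]; exact hcs
    _ ≤ Real.sqrt (∑ i, x i ^ 2) * (c ^ k * Real.sqrt (∑ i, x i ^ 2)) := by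
        have := Real.sqrt_nonneg (∑ i, x i ^ 2)
        nlinarith [h1, h2.le, h2.ge]
    _ = c ^ k * (Real.sqrt (∑ i, x i ^ 2) * Real.sqrt (∑ i, x i ^ 2)) := by ring
    _ = c ^ k * ∑ i, x i ^ 2 := by rw [Real.mul_self_sqrt hx0]

set_option maxHeartbeats 1000000 in
/-- ℓ₂-error bound for the Graph-Piecewise-Polynomial-Lasso (Theorem: fixed design, part (a)).
The estimator `β̂` minimizes `(1/(2N))‖y - Xβ‖₂² + λ_g‖Δ^{(k+1)}β‖₁ + λ‖β‖₁`, where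
`Δ^{(k+1)}` is the order-`(k+1)` graph difference operator of a graph with maximum degree `d`
(so `(Δ^{(k+1)})ᵀΔ^{(k+1)} = L^{k+1}`).  If `λ ≥ (2/N)‖εᵀXD⁺‖_∞` and the restricted
eigenvalue condition `(1/N)‖XD⁺v‖₂² ≥ η‖v‖₂²` holds on the cone
`C = {v : ‖v_{S^c}‖₁ ≤ 3‖v_S‖₁}` (with `S = S₁ ∪ {m+i : i ∈ S₂}` built from the supports
`S₁` of `Δ^{(k+1)}β*` and `S₂` of `β*`), then
`‖β̂ - β*‖₂ ≤ (3λ_g√((2d)^{k+1}s₁) + 3λ√s₂)/η` with `s₁ = |S₁|`, `s₂ = |S₂|`. -/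
theorem gppl_l2_error_bound (N n m k : ℕ) (hN : 0 < N)
    (G : SimpleGraph (Fin n)) [DecidableRel G.Adj]
    (Δop : Matrix (Fin m) (Fin n) ℝ)
    (hΔ : Δopᵀ * Δop = (G.lapMatrix ℝ) ^ (k + 1))
    (X : Matrix (Fin N) (Fin n) ℝ) (ε : Fin N → ℝ) (βstar : Fin n → ℝ)
    (lam lamg η : ℝ) (hlam0 : 0 < lam) (hlamg0 : 0 < lamg) (hη : 0 < η)
    (D : Matrix (Fin m ⊕ Fin n) (Fin n) ℝ)
    (hD : D = Matrix.fromRows ((lamg / lam) • Δop) (1 : Matrix (Fin n) (Fin n) ℝ))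
    (Dplus : Matrix (Fin n) (Fin m ⊕ Fin n) ℝ) (hDplus : Dplus * D = 1)
    (S1 : Finset (Fin m)) (hS1 : ∀ i, i ∈ S1 ↔ Δop.mulVec βstar i ≠ 0)
    (S2 : Finset (Fin n)) (hS2 : ∀ i, i ∈ S2 ↔ βstar i ≠ 0)
    (S : Finset (Fin m ⊕ Fin n))
    (hS : S = S1.map ⟨Sum.inl, Sum.inl_injective⟩ ∪ S2.map ⟨Sum.inr, Sum.inr_injective⟩)
    (hRE : ∀ v : Fin m ⊕ Fin n → ℝ,
      (∑ i ∈ Sᶜ, |v i|) ≤ 3 * ∑ i ∈ S, |v i| →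
      η * ∑ i, v i ^ 2 ≤ 1 / (N : ℝ) * ∑ j, (X * Dplus).mulVec v j ^ 2)
    (hlam : ∀ j, 2 / (N : ℝ) * |Matrix.vecMul ε (X * Dplus) j| ≤ lam)
    (βhat : Fin n → ℝ)
    (hopt : ∀ β : Fin n → ℝ,
      1 / (2 * (N : ℝ)) * ∑ i, ((X.mulVec βstar + ε) i - X.mulVec βhat i) ^ 2
          + lamg * ∑ i, |Δop.mulVec βhat i| + lam * ∑ i, |βhat i|
        ≤ 1 / (2 * (N : ℝ)) * ∑ i, ((X.mulVec βstar + ε) i - X.mulVec β i) ^ 2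
          + lamg * ∑ i, |Δop.mulVec β i| + lam * ∑ i, |β i|) :
    Real.sqrt (∑ i, (βhat i - βstar i) ^ 2)
      ≤ (3 * lamg * Real.sqrt ((2 * (G.maxDegree : ℝ)) ^ (k + 1) * S1.card)
          + 3 * lam * Real.sqrt (S2.card)) / η := by
  classical
  have hNR : (0:ℝ) < (N:ℝ) := by exact_mod_cast hN
  set u : Fin n → ℝ := βhat - βstar with hu
  set Δu : Fin m → ℝ := Δop.mulVec u with hΔu
  set v : Fin m ⊕ Fin n → ℝ := D.mulVec u with hv
  set w : Fin N → ℝ := X.mulVec u with hw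
  clear_value u Δu v w
  have hratio : (0:ℝ) < lamg / lam := div_pos hlamg0 hlam0
  have hvl : ∀ i, v (Sum.inl i) = (lamg / lam) * Δu i := by
    intro i
    rw [hv, hD, Matrix.fromRows_mulVec]
    simp [Matrix.smul_mulVec, hΔu]
  have hvr : ∀ i, v (Sum.inr i) = u i := by
    intro i
    rw [hv, hD, Matrix.fromRows_mulVec]
    simp [Matrix.one_mulVec]
  have hdisj : Disjoint (S1.map ⟨Sum.inl, Sum.inl_injective⟩)
      (S2.map ⟨Sum.inr, Sum.inr_injective⟩) := by
    rw [Finset.disjoint_left]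
    rintro a ha hb
    rw [Finset.mem_map] at ha hb
    obtain ⟨i, _, rfl⟩ := ha
    obtain ⟨j, _, hj⟩ := hb
    simp at hj
  have hsumS : ∀ f : (Fin m ⊕ Fin n) → ℝ,
      ∑ i ∈ S, f i = ∑ i ∈ S1, f (Sum.inl i) + ∑ i ∈ S2, f (Sum.inr i) := by
    intro f
    rw [hS, Finset.sum_union hdisj, Finset.sum_map, Finset.sum_map]
    rfl
  set a1 := ∑ i ∈ S1, |Δu i| with ha1
  set A1 := ∑ i : Fin m, |Δu i| with hA1
  set b1 := ∑ i ∈ S2, |u i| with hb1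
  set B1 := ∑ i : Fin n, |u i| with hB1
  have ha1A1 : a1 ≤ A1 := by
    rw [ha1, hA1]
    exact Finset.sum_le_univ_sum_of_nonneg fun i => abs_nonneg _
  have hb1B1 : b1 ≤ B1 := by
    rw [hb1, hB1]
    exact Finset.sum_le_univ_sum_of_nonneg fun i => abs_nonneg _
  have hT : ∑ i : Fin m ⊕ Fin n, |v i| = (lamg / lam) * A1 + B1 := by
    rw [Fintype.sum_sum_type, hA1, hB1, Finset.mul_sum]
    congr 1
    · refine Finset.sum_congr rfl fun i _ => ?_
      rw [hvl i, abs_mul, abs_of_pos hratio]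
    · exact Finset.sum_congr rfl fun i _ => by rw [hvr i]
  have htS : ∑ i ∈ S, |v i| = (lamg / lam) * a1 + b1 := by
    rw [hsumS, ha1, hb1, Finset.mul_sum]
    congr 1
    · refine Finset.sum_congr rfl fun i _ => ?_
      rw [hvl i, abs_mul, abs_of_pos hratio]
    · exact Finset.sum_congr rfl fun i _ => by rw [hvr i]
  have huv : Dplus.mulVec v = u := by
    rw [hv, Matrix.mulVec_mulVec, hDplus, Matrix.one_mulVec]
  have hXu : w = (X * Dplus).mulVec v := by
    rw [hw, ← huv, Matrix.mulVec_mulVec]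
  have hres : ∀ i, (X.mulVec βstar + ε) i - X.mulVec βhat i = ε i - w i := by
    intro i
    rw [hw, hu, Matrix.mulVec_sub]
    simp only [Pi.add_apply, Pi.sub_apply]
    ring
  have hres0 : ∀ i, (X.mulVec βstar + ε) i - X.mulVec βstar i = ε i := fun i => by
    simp only [Pi.add_apply]; ring
  have hbase := hopt βstar
  have e1 : ∑ i, ((X.mulVec βstar + ε) i - X.mulVec βhat i) ^ 2
      = ∑ i, (ε i - w i) ^ 2 := Finset.sum_congr rfl fun i _ => by rw [hres i]
  have e2 : ∑ i, ((X.mulVec βstar + ε) i - X.mulVec βstar i) ^ 2 = ∑ i, ε i ^ 2 :=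
    Finset.sum_congr rfl fun i _ => by rw [hres0 i]
  rw [e1, e2] at hbase
  have e3 : ∑ i, (ε i - w i) ^ 2
      = ∑ i, ε i ^ 2 - 2 * ∑ i, ε i * w i + ∑ i, w i ^ 2 := by
    rw [Finset.mul_sum, ← Finset.sum_sub_distrib, ← Finset.sum_add_distrib]
    exact Finset.sum_congr rfl fun i _ => by ring
  rw [e3] at hbase
  have hsplit : 1 / (2 * (N:ℝ)) * (∑ i, ε i ^ 2 - 2 * ∑ i, ε i * w i + ∑ i, w i ^ 2)
      = 1 / (2 * (N:ℝ)) * ∑ i, ε i ^ 2 - 1 / (N:ℝ) * ∑ i, ε i * w i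
        + 1 / (2 * (N:ℝ)) * ∑ i, w i ^ 2 := by
    field_simp
  rw [hsplit] at hbase
  have key1 : 1 / (2 * (N:ℝ)) * ∑ i, w i ^ 2
      ≤ 1 / (N:ℝ) * ∑ i, ε i * w i
        + (lamg * ∑ i, |Δop.mulVec βstar i| - lamg * ∑ i, |Δop.mulVec βhat i|)
        + (lam * ∑ i, |βstar i| - lam * ∑ i, |βhat i|) := by
    linarith [hbase]
  set z := Matrix.vecMul ε (X * Dplus) with hz
  clear_value z
  have hE : ∑ i, ε i * w i ≤ ((N:ℝ) * lam / 2) * ∑ j, |v j| := by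
    have h1 : ∑ i, ε i * w i = ∑ j, z j * v j := by
      rw [hz, hXu]
      rw [show (∑ i, ε i * ((X * Dplus).mulVec v) i) = ε ⬝ᵥ ((X * Dplus) *ᵥ v) from rfl]
      rw [Matrix.dotProduct_mulVec]
      rfl
    have h2 : ∀ j, z j * v j ≤ ((N:ℝ) * lam / 2) * |v j| := by
      intro j
      have hj := hlam j
      rw [div_mul_eq_mul_div, div_le_iff₀ hNR] at hj
      have hzj : |z j| ≤ (N:ℝ) * lam / 2 := by linarith
      calc z j * v j ≤ |z j * v j| := le_abs_self _
        _ = |z j| * |v j| := abs_mul _ _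
        _ ≤ ((N:ℝ) * lam / 2) * |v j| := mul_le_mul_of_nonneg_right hzj (abs_nonneg _)
    calc ∑ i, ε i * w i = ∑ j, z j * v j := h1
      _ ≤ ∑ j, ((N:ℝ) * lam / 2) * |v j| := Finset.sum_le_sum fun j _ => h2 j
      _ = ((N:ℝ) * lam / 2) * ∑ j, |v j| := (Finset.mul_sum _ _ _).symm
  have hpen1 : ∑ i, |Δop.mulVec βstar i| - ∑ i, |Δop.mulVec βhat i| ≤ 2 * a1 - A1 := by
    have hΔd : ∀ i, Δop.mulVec βhat i - Δop.mulVec βstar i = Δu i := by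
      intro i
      rw [hΔu, hu, Matrix.mulVec_sub]
      simp only [Pi.sub_apply]
    have hin : ∀ i ∈ S1, |Δop.mulVec βstar i| - |Δop.mulVec βhat i| ≤ |Δu i| := by
      intro i _
      calc |Δop.mulVec βstar i| - |Δop.mulVec βhat i|
          ≤ |Δop.mulVec βstar i - Δop.mulVec βhat i| := abs_sub_abs_le_abs_sub _ _
        _ = |Δu i| := by rw [abs_sub_comm, hΔd i]
    have hout : ∀ i ∈ S1ᶜ, |Δop.mulVec βstar i| - |Δop.mulVec βhat i| = -|Δu i| := by
      intro i hi
      have h0 : Δop.mulVec βstar i = 0 := by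
        by_contra h
        exact (Finset.mem_compl.mp hi) ((hS1 i).mpr h)
      rw [← hΔd i, h0]
      simp
    have e : ∑ i ∈ S1, (|Δop.mulVec βstar i| - |Δop.mulVec βhat i|)
        + ∑ i ∈ S1ᶜ, (|Δop.mulVec βstar i| - |Δop.mulVec βhat i|)
        = ∑ i, (|Δop.mulVec βstar i| - |Δop.mulVec βhat i|) :=
      Finset.sum_add_sum_compl S1 _
    have bin : ∑ i ∈ S1, (|Δop.mulVec βstar i| - |Δop.mulVec βhat i|) ≤ a1 := by
      rw [ha1]; exact Finset.sum_le_sum hin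
    have bout : ∑ i ∈ S1ᶜ, (|Δop.mulVec βstar i| - |Δop.mulVec βhat i|)
        = -(A1 - a1) := by
      rw [Finset.sum_congr rfl hout, Finset.sum_neg_distrib]
      have hcompl : ∑ i ∈ S1, |Δu i| + ∑ i ∈ S1ᶜ, |Δu i| = ∑ i, |Δu i| :=
        Finset.sum_add_sum_compl S1 _
      linarith [hcompl, ha1, hA1]
    have etot : ∑ i, (|Δop.mulVec βstar i| - |Δop.mulVec βhat i|)
        = ∑ i, |Δop.mulVec βstar i| - ∑ i, |Δop.mulVec βhat i| :=
      Finset.sum_sub_distrib _ _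
    linarith [e, bin, bout, etot]
  have hpen2 : ∑ i, |βstar i| - ∑ i, |βhat i| ≤ 2 * b1 - B1 := by
    have hd : ∀ i : Fin n, βhat i - βstar i = u i := by
      intro i; rw [hu]; simp only [Pi.sub_apply]
    have hin : ∀ i ∈ S2, |βstar i| - |βhat i| ≤ |u i| := by
      intro i _
      calc |βstar i| - |βhat i| ≤ |βstar i - βhat i| := abs_sub_abs_le_abs_sub _ _
        _ = |u i| := by rw [abs_sub_comm, hd i]
    have hout : ∀ i ∈ S2ᶜ, |βstar i| - |βhat i| = -|u i| := by
      intro i hi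
      have h0 : βstar i = 0 := by
        by_contra h
        exact (Finset.mem_compl.mp hi) ((hS2 i).mpr h)
      rw [← hd i, h0]
      simp
    have e : ∑ i ∈ S2, (|βstar i| - |βhat i|) + ∑ i ∈ S2ᶜ, (|βstar i| - |βhat i|)
        = ∑ i, (|βstar i| - |βhat i|) := Finset.sum_add_sum_compl S2 _
    have bin : ∑ i ∈ S2, (|βstar i| - |βhat i|) ≤ b1 := by
      rw [hb1]; exact Finset.sum_le_sum hin
    have bout : ∑ i ∈ S2ᶜ, (|βstar i| - |βhat i|) = -(B1 - b1) := by
      rw [Finset.sum_congr rfl hout, Finset.sum_neg_distrib]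
      have hcompl : ∑ i ∈ S2, |u i| + ∑ i ∈ S2ᶜ, |u i| = ∑ i, |u i| :=
        Finset.sum_add_sum_compl S2 _
      linarith [hcompl, hb1, hB1]
    have etot : ∑ i, (|βstar i| - |βhat i|)
        = ∑ i, |βstar i| - ∑ i, |βhat i| := Finset.sum_sub_distrib _ _
    linarith [e, bin, bout, etot]
  have W0 : (0:ℝ) ≤ ∑ i, w i ^ 2 := Finset.sum_nonneg fun i _ => sq_nonneg _
  have key2 : 1 / (2 * (N:ℝ)) * ∑ i, w i ^ 2
      ≤ lam / 2 * ∑ j, |v j|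
        + (2 * (lamg * a1 + lam * b1) - (lamg * A1 + lam * B1)) := by
    have h1N : 1 / (N:ℝ) * ∑ i, ε i * w i ≤ lam / 2 * ∑ j, |v j| := by
      have h := mul_le_mul_of_nonneg_left hE
        (le_of_lt (by positivity : (0:ℝ) < 1 / (N:ℝ)))
      calc 1 / (N:ℝ) * ∑ i, ε i * w i
          ≤ 1 / (N:ℝ) * (((N:ℝ) * lam / 2) * ∑ j, |v j|) := h
        _ = lam / 2 * ∑ j, |v j| := by field_simp
    have hg1 := mul_le_mul_of_nonneg_left hpen1 hlamg0.le
    have hg2 := mul_le_mul_of_nonneg_left hpen2 hlam0.le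
    linarith [key1, hg1, hg2, h1N]
  have hlne : lam ≠ 0 := ne_of_gt hlam0
  have hlmS : lam * ∑ i ∈ S, |v i| = lamg * a1 + lam * b1 := by
    rw [htS]
    field_simp
  have hlmT : lam * ∑ i : Fin m ⊕ Fin n, |v i| = lamg * A1 + lam * B1 := by
    rw [hT]
    field_simp
  have hconeq : ∑ i ∈ S, |v i| + ∑ i ∈ Sᶜ, |v i| = ∑ i : Fin m ⊕ Fin n, |v i| :=
    Finset.sum_add_sum_compl S _
  have hTS : ∑ i ∈ S, |v i| ≤ ∑ i : Fin m ⊕ Fin n, |v i| :=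
    Finset.sum_le_univ_sum_of_nonneg fun i => abs_nonneg _
  have hcone : ∑ i ∈ Sᶜ, |v i| ≤ 3 * ∑ i ∈ S, |v i| := by
    have h0 : (0:ℝ) ≤ lam / 2 * ∑ j, |v j|
        + (2 * (lamg * a1 + lam * b1) - (lamg * A1 + lam * B1)) :=
      le_trans (by positivity) key2
    have hT4 : lam * ∑ i : Fin m ⊕ Fin n, |v i| ≤ lam * (4 * ∑ i ∈ S, |v i|) := by
      linarith [h0, hlmS, hlmT]
    have := (mul_le_mul_iff_right₀ hlam0).mp hT4
    linarith [hconeq, this]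
  have hRE' := hRE v hcone
  rw [← hXu] at hRE'
  have hfin1 : η * ∑ i, v i ^ 2 ≤ 3 * (lamg * a1 + lam * b1) := by
    have hid : 1 / (N:ℝ) * ∑ j, w j ^ 2
        = 2 * (1 / (2 * (N:ℝ)) * ∑ j, w j ^ 2) := by
      field_simp
    have hTge : lam * ∑ i ∈ S, |v i| ≤ lam * ∑ i : Fin m ⊕ Fin n, |v i| :=
      mul_le_mul_of_nonneg_left hTS hlam0.le
    linarith [hRE', key2, hlmS, hlmT, hTge, hid]
  have hvu : ∑ i : Fin n, u i ^ 2 ≤ ∑ i : Fin m ⊕ Fin n, v i ^ 2 := by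
    rw [Fintype.sum_sum_type]
    have h1 : (0:ℝ) ≤ ∑ i : Fin m, v (Sum.inl i) ^ 2 :=
      Finset.sum_nonneg fun i _ => sq_nonneg _
    have h2 : ∑ i : Fin n, v (Sum.inr i) ^ 2 = ∑ i, u i ^ 2 :=
      Finset.sum_congr rfl fun i _ => by rw [hvr i]
    linarith [h1, h2]
  have hu0 : (0:ℝ) ≤ ∑ i, u i ^ 2 := Finset.sum_nonneg fun i _ => sq_nonneg _
  set t := Real.sqrt (∑ i, u i ^ 2) with htdef
  clear_value t
  have ht0 : 0 ≤ t := htdef ▸ Real.sqrt_nonneg _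
  have htsq : t ^ 2 = ∑ i, u i ^ 2 := by rw [htdef]; exact Real.sq_sqrt hu0
  have hdpow0 : (0:ℝ) ≤ (2 * (G.maxDegree : ℝ)) ^ (k + 1) := by positivity
  have hlapsym : (G.lapMatrix ℝ)ᵀ = G.lapMatrix ℝ := G.isSymm_lapMatrix (R := ℝ)
  have hlap := gppl_quad_pow (G.lapMatrix ℝ) hlapsym (gppl_lap_quad_nonneg G)
    (2 * (G.maxDegree : ℝ)) (by positivity) (fun z => gppl_lap_quad_le G z) (k + 1) u
  have hΔsq : ∑ i, Δu i ^ 2 = u ⬝ᵥ ((G.lapMatrix ℝ) ^ (k + 1)) *ᵥ u := by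
    rw [← hΔ, ← Matrix.mulVec_mulVec, Matrix.dotProduct_mulVec, Matrix.vecMul_transpose]
    rw [hΔu]
    simp [dotProduct, sq]
  have hΔbound : ∑ i, Δu i ^ 2 ≤ (2 * (G.maxDegree : ℝ)) ^ (k + 1) * ∑ i, u i ^ 2 := by
    rw [hΔsq]; exact hlap
  have ha1t : a1 ≤ Real.sqrt ((2 * (G.maxDegree : ℝ)) ^ (k + 1) * S1.card) * t := by
    have h := Real.sum_mul_le_sqrt_mul_sqrt S1 (fun _ => (1:ℝ)) (fun i => |Δu i|)
    simp only [one_mul, one_pow, sq_abs] at h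
    rw [Finset.sum_const, nsmul_eq_mul, mul_one] at h
    have hmono : Real.sqrt (∑ i ∈ S1, Δu i ^ 2)
        ≤ Real.sqrt ((2 * (G.maxDegree : ℝ)) ^ (k + 1) * ∑ i, u i ^ 2) := by
      refine Real.sqrt_le_sqrt ?_
      refine le_trans (Finset.sum_le_univ_sum_of_nonneg fun i => sq_nonneg _) hΔbound
    have heq : Real.sqrt ((2 * (G.maxDegree : ℝ)) ^ (k + 1) * ∑ i, u i ^ 2)
        = Real.sqrt ((2 * (G.maxDegree : ℝ)) ^ (k + 1)) * t := by
      rw [Real.sqrt_mul hdpow0, htdef]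
    have heq2 : Real.sqrt ((2 * (G.maxDegree : ℝ)) ^ (k + 1) * S1.card)
        = Real.sqrt ((2 * (G.maxDegree : ℝ)) ^ (k + 1)) * Real.sqrt (S1.card) := by
      rw [Real.sqrt_mul hdpow0]
    calc a1 ≤ Real.sqrt (S1.card) * Real.sqrt (∑ i ∈ S1, Δu i ^ 2) := by
          rw [ha1]; exact h
      _ ≤ Real.sqrt (S1.card)
            * (Real.sqrt ((2 * (G.maxDegree : ℝ)) ^ (k + 1)) * t) := by
          rw [← heq]
          exact mul_le_mul_of_nonneg_left hmono (Real.sqrt_nonneg _)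
      _ = Real.sqrt ((2 * (G.maxDegree : ℝ)) ^ (k + 1) * S1.card) * t := by
          rw [heq2]; ring
  have hb1t : b1 ≤ Real.sqrt (S2.card) * t := by
    have h := Real.sum_mul_le_sqrt_mul_sqrt S2 (fun _ => (1:ℝ)) (fun i => |u i|)
    simp only [one_mul, one_pow, sq_abs] at h
    rw [Finset.sum_const, nsmul_eq_mul, mul_one] at h
    have hmono : Real.sqrt (∑ i ∈ S2, u i ^ 2) ≤ t := by
      rw [htdef]
      refine Real.sqrt_le_sqrt ?_
      exact Finset.sum_le_univ_sum_of_nonneg fun i => sq_nonneg _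
    calc b1 ≤ Real.sqrt (S2.card) * Real.sqrt (∑ i ∈ S2, u i ^ 2) := by
          rw [hb1]; exact h
      _ ≤ Real.sqrt (S2.card) * t :=
          mul_le_mul_of_nonneg_left hmono (Real.sqrt_nonneg _)
  set A : ℝ := 3 * lamg * Real.sqrt ((2 * (G.maxDegree : ℝ)) ^ (k + 1) * S1.card)
      + 3 * lam * Real.sqrt (S2.card) with hA
  clear_value A
  have hA0 : 0 ≤ A := by
    rw [hA]; positivity
  have hfinal : η * t ^ 2 ≤ A * t := by
    rw [htsq, hA]
    have hgoal1 := mul_le_mul_of_nonneg_left hvu hη.le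
    have hm1 := mul_le_mul_of_nonneg_left ha1t hlamg0.le
    have hm2 := mul_le_mul_of_nonneg_left hb1t hlam0.le
    linarith [hgoal1, hfin1, hm1, hm2]
  have hgoalrw : ∑ i, (βhat i - βstar i) ^ 2 = ∑ i, u i ^ 2 :=
    Finset.sum_congr rfl fun i _ => by rw [hu]; simp only [Pi.sub_apply]
  rw [hgoalrw]
  rcases eq_or_lt_of_le ht0 with h | h
  · rw [← htdef, ← h]
    positivity
  · have h1 : η * t ≤ A := by
      have hmul : (η * t) * t ≤ A * t := by linarith [hfinal]
      exact le_of_mul_le_mul_right hmul h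
    rw [← htdef, le_div_iff₀ hη]
    linarith [h1]
end

section
/- Let G be a connected undirected graph with Laplacian L and F_{-S} the incidence matrix with rows indexed by S removed, inducing a subgraph with connected components C₁,...,C_j. Then for even k, the null space of F_{-S} L^{k/2} equals span(𝟙ₙ) + (span(𝟙ₙ)^⊥ ∩ (L^{k/2} + 𝟙ₙ𝟙ₙᵀ)^{-1} span(𝟙_{C₁},...,𝟙_{C_j})), where 𝟙ₙ is the all-ones vector and 𝟙_{C_i} the indicator vector of component C_i. -/
open Matrix

/-- Null space structure (even order case).  Let `G` be a connected graph with oriented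
incidence matrix `F` and Laplacian `L`, and let `F_{-S}` be `F` with the rows indexed by `S`
removed; removing the corresponding edges yields a subgraph `G'` whose connected components
are `C₁, …, C_j`.  Then, for even order `k = 2t`, the null space of `F_{-S} L^{k/2}` is
`span(𝟙ₙ) + (span(𝟙ₙ)^⊥ ∩ (L^{k/2} + 𝟙ₙ𝟙ₙᵀ)^{-1} span(𝟙_{C₁}, …, 𝟙_{C_j}))`:
`x` is in the null space iff `x = c𝟙ₙ + u` with `𝟙ₙᵀu = 0` and `(L^{k/2} + 𝟙ₙ𝟙ₙᵀ)u`
constant on each connected component of `G'`. -/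
theorem nullspace_of_reduced_incidence_times_lap_pow (n p t : ℕ) (hn : 0 < n)
    (G : SimpleGraph (Fin n)) [DecidableRel G.Adj] (hconn : G.Connected)
    (a b : Fin p → Fin n)
    (hab : ∀ kk, a kk < b kk)
    (hadj : ∀ kk, G.Adj (a kk) (b kk))
    (hbij : ∀ i j : Fin n, G.Adj i j → i < j → ∃! kk : Fin p, a kk = i ∧ b kk = j)
    (F : Matrix (Fin p) (Fin n) ℝ)
    (hF : ∀ kk l, F kk l = if l = a kk then -1 else if l = b kk then 1 else 0)
    (S : Finset (Fin p)) :
    ∀ x : Fin n → ℝ,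
      (F.submatrix (Subtype.val : {kk : Fin p // kk ∉ S} → Fin p) id
          * (G.lapMatrix ℝ) ^ t).mulVec x = 0
        ↔ ∃ (c : ℝ) (u : Fin n → ℝ),
            (∑ i, u i = 0)
            ∧ (∀ i j : Fin n,
                (SimpleGraph.fromRel
                    (fun i j : Fin n => ∃ kk : Fin p, kk ∉ S ∧ a kk = i ∧ b kk = j)).Reachable i j →
                ((G.lapMatrix ℝ ^ t + Matrix.of fun _ _ : Fin n => (1 : ℝ)).mulVec u) i
                  = ((G.lapMatrix ℝ ^ t + Matrix.of fun _ _ : Fin n => (1 : ℝ)).mulVec u) j)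
            ∧ x = (fun _ => c) + u := by

  intro x
  classical
  set L := G.lapMatrix ℝ with hL
  set M := L ^ t with hM
  set v := M.mulVec x with hv
  set R : Fin n → Fin n → Prop := fun i j => ∃ kk : Fin p, kk ∉ S ∧ a kk = i ∧ b kk = j with hR
  -- row formula
  have hrow : ∀ (kk : {kk : Fin p // kk ∉ S}),
      (F.submatrix (Subtype.val : {kk : Fin p // kk ∉ S} → Fin p) id * M).mulVec x kk
        = v (b kk.val) - v (a kk.val) := by
    intro kk
    rw [← Matrix.mulVec_mulVec]
    have hne : a kk.val ≠ b kk.val := (hab kk.val).ne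
    have hterm : ∀ l, F kk.val l * v l =
        (if l = a kk.val then -(v l) else 0) + (if l = b kk.val then v l else 0) := by
      intro l
      rw [hF]
      rcases eq_or_ne l (a kk.val) with h1 | h1
      · subst h1
        simp [hne]
      · rcases eq_or_ne l (b kk.val) with h2 | h2 <;> simp [h1, h2, Ne.symm hne]
    show ∑ l, F kk.val l * M.mulVec x l = _
    rw [Finset.sum_congr rfl fun l _ => hterm l, Finset.sum_add_distrib,
      Finset.sum_ite_eq' Finset.univ (a kk.val) (fun l => -(v l)),
      Finset.sum_ite_eq' Finset.univ (b kk.val) v]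
    simp [sub_eq_neg_add]
  have key : (F.submatrix (Subtype.val : {kk : Fin p // kk ∉ S} → Fin p) id * M).mulVec x = 0
      ↔ ∀ kk : Fin p, kk ∉ S → v (a kk) = v (b kk) := by
    constructor
    · intro h kk hkk
      have := congrFun h ⟨kk, hkk⟩
      rw [hrow ⟨kk, hkk⟩] at this
      have : v (b kk) - v (a kk) = 0 := this
      linarith
    · intro h
      funext kk
      have : v (b kk.val) - v (a kk.val) = 0 := by rw [h kk.val kk.prop]; ring
      rw [Pi.zero_apply, hrow kk, this]
  -- reachability propagation
  have hreach : ∀ (w : Fin n → ℝ), (∀ kk, kk ∉ S → w (a kk) = w (b kk)) →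
      ∀ i j, (SimpleGraph.fromRel R).Reachable i j → w i = w j := by
    intro w hw i j hr
    obtain ⟨q⟩ := hr
    induction q with
    | nil => rfl
    | cons hadj' q ih =>
      rw [SimpleGraph.fromRel_adj] at hadj'
      obtain ⟨-, h | h⟩ := hadj'
      · obtain ⟨kk, hkk, rfl, rfl⟩ := h
        exact (hw kk hkk).trans ih
      · obtain ⟨kk, hkk, rfl, rfl⟩ := h
        exact (hw kk hkk).symm.trans ih
  -- M applied to constants
  have hMconst : ∀ c : ℝ, M.mulVec (fun _ => c) = (fun _ => (if t = 0 then c else 0)) := by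
    intro c
    cases t with
    | zero =>
      simp only [hM, pow_zero, Matrix.one_mulVec]
      funext i; simp
    | succ s =>
      have h1 : L.mulVec (fun _ => c) = 0 := by
        have h0 : L.mulVec (fun _ => (1 : ℝ)) = 0 := G.lapMatrix_mulVec_const_eq_zero
        have : (fun _ : Fin n => c) = c • (fun _ : Fin n => (1:ℝ)) := by funext i; simp
        rw [this, Matrix.mulVec_smul, h0, smul_zero]
      rw [hM, pow_succ, ← Matrix.mulVec_mulVec, h1, Matrix.mulVec_zero]
      funext i; simp
  have hJ : ∀ u : Fin n → ℝ, (∑ i, u i = 0) →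
      (Matrix.of fun _ _ : Fin n => (1 : ℝ)).mulVec u = 0 := by
    intro u hu
    funext i
    show ∑ j, (1 : ℝ) * u j = 0
    simpa using hu
  constructor
  · intro h
    have hv0 := key.mp h
    set c : ℝ := (∑ i, x i) / n with hc
    refine ⟨c, x - (fun _ => c), ?_, ?_, ?_⟩
    · have hn' : (n : ℝ) ≠ 0 := Nat.cast_ne_zero.mpr hn.ne'
      simp only [Pi.sub_apply, Finset.sum_sub_distrib, Finset.sum_const,
        Finset.card_univ, Fintype.card_fin, nsmul_eq_mul, hc]
      field_simp
      ring
    · intro i j hij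
      have hsum : ∑ i, (x i - c) = 0 := by
        have hn' : (n : ℝ) ≠ 0 := Nat.cast_ne_zero.mpr hn.ne'
        simp only [Finset.sum_sub_distrib, Finset.sum_const, Finset.card_univ,
          Fintype.card_fin, nsmul_eq_mul, hc]
        field_simp
        ring
      have hdec : (M + Matrix.of fun _ _ : Fin n => (1 : ℝ)).mulVec (x - (fun _ => c))
          = fun i => v i - (if t = 0 then c else 0) := by
        rw [Matrix.add_mulVec, Matrix.mulVec_sub, hMconst c, hJ _ (by simpa using hsum)]
        funext i
        simp [hv]
      rw [hdec]
      have := hreach v hv0 i j hij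
      simp [this]
    · funext i; simp
  · rintro ⟨c, u, hsum, hcst, rfl⟩
    apply key.mpr
    intro kk hkk
    have hvdec : v = fun i =>
        ((M + Matrix.of fun _ _ : Fin n => (1 : ℝ)).mulVec u) i + (if t = 0 then c else 0) := by
      rw [hv, Matrix.mulVec_add, hMconst c, Matrix.add_mulVec, hJ u hsum]
      funext i
      simp [add_comm]
    have hr : (SimpleGraph.fromRel R).Reachable (a kk) (b kk) := by
      apply SimpleGraph.Adj.reachable
      rw [SimpleGraph.fromRel_adj]
      exact ⟨(hab kk).ne, Or.inl ⟨kk, hkk, rfl, rfl⟩⟩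
    have := hcst (a kk) (b kk) hr
    rw [hvdec]
    simp only []
    rw [this]
end
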